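/- arXiv:1512.06439 — 3 statements merged into one kernel-verified Lean document; each statement's English description precedes it below -/
import Mathlib

section
/- The unweighted diamond graphs are not uniformly doubling: for every constant D ≥ 1 there exists n ∈ ℕ such that the metric space (V(D_n), d_{D_n}) is not doubling with constant D. In fact, the closed ball of radius 1 centered at the bottom vertex of D_n has diameter 2 and cannot be covered by fewer than (2^n + 1)/2 sets of diameter at most 1. -/
/-- A graph given by a set of oriented edges. -/
structure EGraph where
  V : Type
  E : Type
  src : E → V
  tgt : E → V

/-- The diamond graphs `D_n`: `D_0` is a single edge, and `D_{n+1}` is obtained from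
`D_n` by replacing each edge `uv` by a quadrilateral `u, a, v, b` (two new vertices
per edge, encoded as `(e, false)` and `(e, true)`). -/
def diamond : ℕ → EGraph
  | 0 => { V := Bool, E := Unit, src := fun _ => false, tgt := fun _ => true }
  | n + 1 =>
    let G := diamond n
    { V := G.V ⊕ (G.E × Bool)
      E := G.E × Fin 4
      src := fun p =>
        if p.2.val = 0 then Sum.inl (G.src p.1)
        else if p.2.val = 1 then Sum.inr (p.1, false)
        else if p.2.val = 2 then Sum.inl (G.src p.1)
        else Sum.inr (p.1, true)
      tgt := fun p =>
        if p.2.val = 0 then Sum.inr (p.1, false)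
        else if p.2.val = 1 then Sum.inl (G.tgt p.1)
        else if p.2.val = 2 then Sum.inr (p.1, true)
        else Sum.inl (G.tgt p.1) }

/-- The Laakso graphs `L_n`: `L_0` is a single edge, and `L_{n+1}` is obtained from `L_n`
by replacing each edge `uv` by a copy of the pattern graph `L_1`.  In the pattern with
endpoints `u, v` and internal vertices `a = 0, b = 1, c = 2, d = 3` (encoded as
`(e, 0), …, (e, 3)`), the six edges are `u-a, a-b, a-c, b-d, c-d, d-v`. -/
def laakso : ℕ → EGraph
  | 0 => { V := Bool, E := Unit, src := fun _ => false, tgt := fun _ => true }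
  | n + 1 =>
    let G := laakso n
    { V := G.V ⊕ (G.E × Fin 4)
      E := G.E × Fin 6
      src := fun p =>
        if p.2.val = 0 then Sum.inl (G.src p.1)
        else if p.2.val = 1 then Sum.inr (p.1, 0)
        else if p.2.val = 2 then Sum.inr (p.1, 0)
        else if p.2.val = 3 then Sum.inr (p.1, 1)
        else if p.2.val = 4 then Sum.inr (p.1, 2)
        else Sum.inr (p.1, 3)
      tgt := fun p =>
        if p.2.val = 0 then Sum.inr (p.1, 0)
        else if p.2.val = 1 then Sum.inr (p.1, 1)
        else if p.2.val = 2 then Sum.inr (p.1, 2)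
        else if p.2.val = 3 then Sum.inr (p.1, 3)
        else if p.2.val = 4 then Sum.inr (p.1, 3)
        else Sum.inl (G.tgt p.1) }

/-- The simple graph underlying an `EGraph`. -/
def EGraph.toSimpleGraph (G : EGraph) : SimpleGraph G.V where
  Adj u v := u ≠ v ∧ ∃ e, (G.src e = u ∧ G.tgt e = v) ∨ (G.src e = v ∧ G.tgt e = u)
  symm := ⟨fun _ _ h => ⟨Ne.symm h.1, h.2.elim fun e he => ⟨e, he.symm⟩⟩⟩
  loopless := ⟨fun _ h => h.1 rfl⟩

/-- The unweighted diamond graph `D_n`; its shortest path metric is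
`(DiamondGraph n).dist`. -/
abbrev DiamondGraph (n : ℕ) : SimpleGraph (diamond n).V := (diamond n).toSimpleGraph

/-- The unweighted Laakso graph `L_n`; its shortest path metric is
`(LaaksoGraph n).dist`. -/
abbrev LaaksoGraph (n : ℕ) : SimpleGraph (laakso n).V := (laakso n).toSimpleGraph

/-- The bottom vertex of `D_n` (the vertex that evolved from the bottom vertex of `D_0`). -/
def diamondBottom : (n : ℕ) → (diamond n).V
  | 0 => false
  | n + 1 => Sum.inl (diamondBottom n)

/-- A graph (with its shortest path metric) is doubling with constant `D` if every set `B`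
can be covered by at most `D` sets whose diameter is at most half the diameter of `B`;
here the diameter condition is expressed via arbitrary upper bounds `dB` on the diameter
of `B`. -/
def GraphDoublingWith {V : Type} (G : SimpleGraph V) (D : ℕ) : Prop :=
  ∀ (B : Set V) (dB : ℕ), (∀ u ∈ B, ∀ v ∈ B, G.dist u v ≤ dB) →
    ∃ 𝒞 : Finset (Set V), 𝒞.card ≤ D ∧ (∀ s ∈ 𝒞, ∀ u ∈ s, ∀ v ∈ s, 2 * G.dist u v ≤ dB) ∧
      B ⊆ ⋃ s ∈ 𝒞, s

lemma diamond_bipartite {n : ℕ} {u v : (diamond (n+1)).V}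
    (h : (DiamondGraph (n+1)).Adj u v) : u.isLeft = !v.isLeft := by
  obtain ⟨ne, ⟨e0, i⟩, h⟩ := h
  fin_cases i <;>
    rcases h with ⟨h1, h2⟩ | ⟨h1, h2⟩ <;>
    simp only [diamond] at h1 h2 <;> subst h1 <;> subst h2 <;> rfl

/-- Edges incident to the bottom vertex. -/
def bedge : (n : ℕ) → Fin (2 ^ n) → (diamond n).E
  | 0, _ => ()
  | n + 1, k =>
    (bedge n ⟨k.val / 2, by have := k.isLt; simp [pow_succ] at this; omega⟩,
     if k.val % 2 = 0 then (0 : Fin 4) else 2)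

lemma bedge_src : ∀ (n : ℕ) (k : Fin (2 ^ n)),
    (diamond n).src (bedge n k) = diamondBottom n
  | 0, _ => rfl
  | n + 1, k => by
    show (diamond (n+1)).src (bedge (n+1) k) = Sum.inl (diamondBottom n)
    by_cases hk : k.val % 2 = 0 <;>
      simp only [bedge, diamond, hk, if_true, if_false, reduceIte] <;>
      simp [bedge_src]

lemma bedge_tgt : ∀ (n : ℕ) (k : Fin (2 ^ (n+1))), (diamond (n+1)).tgt (bedge (n+1) k) =
    Sum.inr (bedge n ⟨k.val / 2, by have := k.isLt; simp [pow_succ] at this; omega⟩,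
      decide (k.val % 2 ≠ 0)) := by
  intro n k
  by_cases hk : k.val % 2 = 0 <;>
    simp only [bedge, diamond, hk, if_true, if_false, reduceIte] <;> simp [hk]

lemma bedge_inj : ∀ (n : ℕ), Function.Injective (bedge n)
  | 0 => fun a b _ => Fin.ext (by have ha := a.isLt; have hb := b.isLt; norm_num at ha hb; omega)
  | n + 1 => by
    intro a b h
    simp only [bedge] at h
    replace h := Prod.mk.inj h
    have h1 := bedge_inj n h.1
    have h2 : a.val % 2 = b.val % 2 := by
      by_cases ha : a.val % 2 = 0 <;> by_cases hb : b.val % 2 = 0 <;>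
        simp [ha, hb] at h ⊢ <;> omega
    have h3 : a.val / 2 = b.val / 2 := congrArg Fin.val h1
    exact Fin.ext (by omega)

lemma tgt_bedge_ne_bottom : ∀ (n : ℕ) (k : Fin (2 ^ n)),
    (diamond n).tgt (bedge n k) ≠ diamondBottom n
  | 0, _ => by simp [diamond, bedge, diamondBottom]
  | n + 1, k => by rw [bedge_tgt n k]; exact fun h => by simp [diamondBottom] at h

lemma tgt_bedge_inj (n : ℕ) : Function.Injective (fun k => (diamond n).tgt (bedge n k)) := by
  cases n with
  | zero => exact fun a b _ => Fin.ext (by have ha := a.isLt; have hb := b.isLt; norm_num at ha hb; omega)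
  | succ n =>
    intro a b h
    have h : (diamond (n+1)).tgt (bedge (n+1) a) = (diamond (n+1)).tgt (bedge (n+1) b) := h
    rw [bedge_tgt n a, bedge_tgt n b] at h
    replace h := Prod.mk.inj (Sum.inr.inj h)
    exact bedge_inj (n+1) (by
      simp only [bedge]
      refine Prod.ext_iff.mpr ?_
      refine ⟨h.1, ?_⟩
      have h2 := h.2
      by_cases ha : a.val % 2 = 0 <;> by_cases hb : b.val % 2 = 0 <;> simp_all)

lemma adj_bottom_tgt (n : ℕ) (k : Fin (2 ^ n)) :
    (DiamondGraph n).Adj (diamondBottom n) ((diamond n).tgt (bedge n k)) := by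
  refine ⟨fun h => tgt_bedge_ne_bottom n k h.symm, ⟨bedge n k, Or.inl ⟨bedge_src n k, rfl⟩⟩⟩

lemma adj_lift {n : ℕ} {u v : (diamond n).V} (h : (DiamondGraph n).Adj u v) :
    (DiamondGraph (n+1)).Reachable (Sum.inl u) (Sum.inl v) := by
  obtain ⟨ne, e, h⟩ := h
  have h1 : (DiamondGraph (n+1)).Adj (Sum.inl ((diamond n).src e))
      (Sum.inr (e, false) : (diamond (n+1)).V) := by
    refine ⟨Sum.inl_ne_inr, ⟨(e, 0), Or.inl ⟨rfl, rfl⟩⟩⟩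
  have h2 : (DiamondGraph (n+1)).Adj (Sum.inr (e, false) : (diamond (n+1)).V)
      (Sum.inl ((diamond n).tgt e)) := by
    refine ⟨Sum.inr_ne_inl, ⟨(e, 1), Or.inl ⟨rfl, rfl⟩⟩⟩
  have hr := h1.reachable.trans h2.reachable
  rcases h with ⟨ha, hb⟩ | ⟨ha, hb⟩ <;> subst ha <;> subst hb
  · exact hr
  · exact hr.symm

lemma reach_lift {n : ℕ} {u v : (diamond n).V} (h : (DiamondGraph n).Reachable u v) :
    (DiamondGraph (n+1)).Reachable (Sum.inl u) (Sum.inl v) := by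
  obtain ⟨w⟩ := h
  induction w with
  | nil => exact SimpleGraph.Reachable.refl _
  | cons ha _ ih => exact (adj_lift ha).trans ih

lemma reach_bottom : ∀ (n : ℕ) (v : (diamond n).V),
    (DiamondGraph n).Reachable v (diamondBottom n)
  | 0, v => by
    cases v with
    | false => exact SimpleGraph.Reachable.refl _
    | true =>
      exact SimpleGraph.Adj.reachable ⟨fun h => Bool.noConfusion h, ⟨(), Or.inr ⟨rfl, rfl⟩⟩⟩
  | n + 1, Sum.inl u => reach_lift (reach_bottom n u)
  | n + 1, Sum.inr (e, b) => by
    have h1 : (DiamondGraph (n+1)).Adj (Sum.inr (e, b) : (diamond (n+1)).V)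
        (Sum.inl ((diamond n).src e)) := by
      cases b with
      | false => exact ⟨Sum.inr_ne_inl, ⟨(e, 0), Or.inr ⟨rfl, rfl⟩⟩⟩
      | true => exact ⟨Sum.inr_ne_inl, ⟨(e, 2), Or.inr ⟨rfl, rfl⟩⟩⟩
    exact h1.reachable.trans (reach_lift (reach_bottom n ((diamond n).src e)))

lemma diamond_connected (n : ℕ) : (DiamondGraph n).Connected := by
  have : Nonempty (diamond n).V := ⟨diamondBottom n⟩
  exact ⟨fun u v => (reach_bottom n u).trans (reach_bottom n v).symm⟩

lemma no_triangle {n : ℕ} {u v w : (diamond (n+1)).V}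
    (huv : (DiamondGraph (n+1)).Adj u v) (hvw : (DiamondGraph (n+1)).Adj v w)
    (huw : (DiamondGraph (n+1)).Adj u w) : False := by
  have h1 := diamond_bipartite huv
  have h2 := diamond_bipartite hvw
  have h3 := diamond_bipartite huw
  cases u.isLeft <;> cases v.isLeft <;> cases w.isLeft <;> simp_all

lemma dist_bottom_tgt (n : ℕ) (k : Fin (2 ^ n)) :
    (DiamondGraph n).dist (diamondBottom n) ((diamond n).tgt (bedge n k)) = 1 :=
  SimpleGraph.dist_eq_one_iff_adj.mpr (adj_bottom_tgt n k)

lemma covering_bound (n : ℕ) (hn : 1 ≤ n) (𝒞 : Finset (Set (diamond n).V))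
    (hsmall : ∀ s ∈ 𝒞, ∀ u ∈ s, ∀ v ∈ s, (DiamondGraph n).dist u v ≤ 1)
    (hcov : {v : (diamond n).V | (DiamondGraph n).dist (diamondBottom n) v ≤ 1} ⊆
      ⋃ s ∈ 𝒞, s) :
    2 ^ n + 1 ≤ 2 * 𝒞.card := by
  classical
  obtain ⟨m, rfl⟩ : ∃ m, n = m + 1 := ⟨n - 1, by omega⟩
  set f : Fin (2 ^ (m+1)) → (diamond (m+1)).V := fun k => (diamond (m+1)).tgt (bedge (m+1) k)
    with hf
  set T : Finset (diamond (m+1)).V :=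
    insert (diamondBottom (m+1)) ((Finset.univ : Finset (Fin (2 ^ (m+1)))).image f) with hT
  have hTcard : T.card = 2 ^ (m+1) + 1 := by
    rw [hT, Finset.card_insert_of_notMem,
      Finset.card_image_of_injective _ (tgt_bedge_inj (m+1))]
    · simp
    · simp only [Finset.mem_image]
      rintro ⟨k, -, hk⟩
      exact tgt_bedge_ne_bottom (m+1) k hk
  have hTball : ∀ x ∈ T, (DiamondGraph (m+1)).dist (diamondBottom (m+1)) x ≤ 1 := by
    intro x hx
    rw [hT] at hx
    rcases Finset.mem_insert.mp hx with rfl | hx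
    · simp [SimpleGraph.dist_self]
    · obtain ⟨k, -, rfl⟩ := Finset.mem_image.mp hx
      rw [hf, dist_bottom_tgt]
  have hfilter : ∀ s ∈ 𝒞, (T.filter (· ∈ s)).card ≤ 2 := by
    intro s hs
    by_contra hlt
    push_neg at hlt
    obtain ⟨a, b, c, ha, hb, hc, hab, hac, hbc⟩ := Finset.two_lt_card_iff.mp hlt
    simp only [Finset.mem_filter] at ha hb hc
    have adj : ∀ x y : (diamond (m+1)).V, x ∈ s → y ∈ s → x ≠ y →
        (DiamondGraph (m+1)).Adj x y := by
      intro x y hx hy hxy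
      have h1 := hsmall s hs x hx y hy
      have h2 := (diamond_connected (m+1)).pos_dist_of_ne hxy
      exact SimpleGraph.dist_eq_one_iff_adj.mp (by omega)
    exact no_triangle (adj a b ha.2 hb.2 hab) (adj b c hb.2 hc.2 hbc)
      (adj a c ha.2 hc.2 hac)
  have hsub : T ⊆ 𝒞.biUnion (fun s => T.filter (· ∈ s)) := by
    intro x hx
    have hxball := hTball x hx
    have := hcov hxball
    simp only [Set.mem_iUnion] at this
    obtain ⟨s, hs, hxs⟩ := this
    exact Finset.mem_biUnion.mpr ⟨s, hs, Finset.mem_filter.mpr ⟨hx, hxs⟩⟩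
  calc 2 ^ (m+1) + 1 = T.card := hTcard.symm
    _ ≤ (𝒞.biUnion (fun s => T.filter (· ∈ s))).card := Finset.card_le_card hsub
    _ ≤ ∑ s ∈ 𝒞, (T.filter (· ∈ s)).card := Finset.card_biUnion_le
    _ ≤ ∑ s ∈ 𝒞, 2 := Finset.sum_le_sum hfilter
    _ = 2 * 𝒞.card := by rw [Finset.sum_const, smul_eq_mul, mul_comm]

lemma ball_diam (n : ℕ) :
    ∀ u ∈ {v : (diamond n).V | (DiamondGraph n).dist (diamondBottom n) v ≤ 1},
    ∀ v ∈ {v : (diamond n).V | (DiamondGraph n).dist (diamondBottom n) v ≤ 1},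
      (DiamondGraph n).dist u v ≤ 2 := by
  intro u hu v hv
  simp only [Set.mem_setOf_eq] at hu hv
  have h1 : (DiamondGraph n).dist u v ≤
      (DiamondGraph n).dist u (diamondBottom n) +
      (DiamondGraph n).dist (diamondBottom n) v := (diamond_connected n).dist_triangle
  have hc : (DiamondGraph n).dist u (diamondBottom n) =
      (DiamondGraph n).dist (diamondBottom n) u := SimpleGraph.dist_comm
  omega


/-- The unweighted diamond graphs are not uniformly doubling: for every
`D ≥ 1` there is `n` such that `D_n` is not doubling with constant `D`.  In fact, for
`n ≥ 1`, the closed ball of radius `1` centered at the bottom vertex of `D_n` has diameter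
`2` and cannot be covered by fewer than `(2^n + 1)/2` sets of diameter at most `1`. -/
theorem diamonds_not_uniformly_doubling :
    (∀ D : ℕ, 1 ≤ D → ∃ n : ℕ, ¬ GraphDoublingWith (DiamondGraph n) D) ∧
    (∀ n : ℕ, 1 ≤ n →
      (∀ u ∈ {v : (diamond n).V | (DiamondGraph n).dist (diamondBottom n) v ≤ 1},
        ∀ v ∈ {v : (diamond n).V | (DiamondGraph n).dist (diamondBottom n) v ≤ 1},
          (DiamondGraph n).dist u v ≤ 2) ∧
      (∃ u ∈ {v : (diamond n).V | (DiamondGraph n).dist (diamondBottom n) v ≤ 1},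
        ∃ v ∈ {v : (diamond n).V | (DiamondGraph n).dist (diamondBottom n) v ≤ 1},
          (DiamondGraph n).dist u v = 2) ∧
      (∀ 𝒞 : Finset (Set (diamond n).V),
        (∀ s ∈ 𝒞, ∀ u ∈ s, ∀ v ∈ s, (DiamondGraph n).dist u v ≤ 1) →
        {v : (diamond n).V | (DiamondGraph n).dist (diamondBottom n) v ≤ 1} ⊆ ⋃ s ∈ 𝒞, s →
        2 ^ n + 1 ≤ 2 * 𝒞.card)) := by
  constructor
  · intro D hD
    refine ⟨D + 1, fun hdoub => ?_⟩
    obtain ⟨𝒞, hcard, hsmall, hcov⟩ := hdoub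
      {v : (diamond (D+1)).V | (DiamondGraph (D+1)).dist (diamondBottom (D+1)) v ≤ 1} 2
      (ball_diam (D+1))
    have hbound := covering_bound (D+1) (by omega) 𝒞
      (fun s hs u hu v hv => by have := hsmall s hs u hu v hv; omega) hcov
    have h2 : D < 2 ^ D := Nat.lt_two_pow_self
    have h3 : 2 ^ (D + 1) = 2 * 2 ^ D := by ring
    omega
  · intro n hn
    refine ⟨ball_diam n, ?_, covering_bound n hn⟩
    obtain ⟨m, rfl⟩ : ∃ m, n = m + 1 := ⟨n - 1, by omega⟩
    have h2 : 1 < 2 ^ (m + 1) := Nat.one_lt_two_pow (by omega)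
    set k0 : Fin (2 ^ (m+1)) := ⟨0, by omega⟩
    set k1 : Fin (2 ^ (m+1)) := ⟨1, h2⟩
    set u := (diamond (m+1)).tgt (bedge (m+1) k0) with hu
    set v := (diamond (m+1)).tgt (bedge (m+1) k1) with hv
    have hmu : (DiamondGraph (m+1)).dist (diamondBottom (m+1)) u ≤ 1 :=
      le_of_eq (dist_bottom_tgt (m+1) k0)
    have hmv : (DiamondGraph (m+1)).dist (diamondBottom (m+1)) v ≤ 1 :=
      le_of_eq (dist_bottom_tgt (m+1) k1)
    refine ⟨u, hmu, v, hmv, ?_⟩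
    have hne : u ≠ v := fun h => by
      have := tgt_bedge_inj (m+1) h
      simp [k0, k1, Fin.ext_iff] at this
    have hnadj : ¬ (DiamondGraph (m+1)).Adj u v := by
      intro hadj
      have hb := diamond_bipartite hadj
      rw [hu, hv, bedge_tgt m k0, bedge_tgt m k1] at hb
      simp at hb
    have hle : (DiamondGraph (m+1)).dist u v ≤ 2 := ball_diam (m+1) u hmu v hmv
    have hpos := (diamond_connected (m+1)).pos_dist_of_ne hne
    have hne1 : (DiamondGraph (m+1)).dist u v ≠ 1 :=
      fun h => hnadj (SimpleGraph.dist_eq_one_iff_adj.mp h)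
    omega
end

section
/- The unweighted Laakso graphs are uniformly doubling: there exists a constant D ≥ 1 such that for every n ∈ ℕ, every bounded subset B of the metric space (V(L_n), d_{L_n}) can be covered by at most D sets of diameter at most diam(B)/2. -/
namespace LaaksoAux
open SimpleGraph

def deq : ∀ n, DecidableEq (laakso n).V × DecidableEq (laakso n).E
  | 0 => ⟨inferInstanceAs (DecidableEq Bool), inferInstanceAs (DecidableEq Unit)⟩
  | n+1 =>
    have hV : DecidableEq (laakso n).V := (deq n).1
    have hE : DecidableEq (laakso n).E := (deq n).2
    ⟨inferInstanceAs (DecidableEq ((laakso n).V ⊕ ((laakso n).E × Fin 4))),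
     inferInstanceAs (DecidableEq ((laakso n).E × Fin 6))⟩

instance (n) : DecidableEq (laakso n).V := (deq n).1
instance (n) : DecidableEq (laakso n).E := (deq n).2

def finL : ∀ n, Fintype (laakso n).V × Fintype (laakso n).E
  | 0 => ⟨inferInstanceAs (Fintype Bool), inferInstanceAs (Fintype Unit)⟩
  | n+1 =>
    have hV : Fintype (laakso n).V := (finL n).1
    have hE : Fintype (laakso n).E := (finL n).2
    ⟨inferInstanceAs (Fintype ((laakso n).V ⊕ ((laakso n).E × Fin 4))),
     inferInstanceAs (Fintype ((laakso n).E × Fin 6))⟩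

instance (n) : Fintype (laakso n).V := (finL n).1
instance (n) : Fintype (laakso n).E := (finL n).2

instance (n) : DecidableRel (LaaksoGraph n).Adj := fun u v =>
  inferInstanceAs (Decidable (u ≠ v ∧ ∃ e, ((laakso n).src e = u ∧ (laakso n).tgt e = v) ∨ ((laakso n).src e = v ∧ (laakso n).tgt e = u)))

-- src/tgt computations
example (n : ℕ) (e : (laakso n).E) : (laakso (n+1)).src ((e, 0) : (laakso n).E × Fin 6) = Sum.inl ((laakso n).src e) := rfl
example (n : ℕ) (e : (laakso n).E) : (laakso (n+1)).tgt ((e, 5) : (laakso n).E × Fin 6) = Sum.inl ((laakso n).tgt e) := rfl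
example (n : ℕ) (e : (laakso n).E) : (laakso (n+1)).src ((e, 3) : (laakso n).E × Fin 6) = Sum.inr (e, 1) := rfl
def proj (n : ℕ) : (laakso (n+1)).V → (laakso n).V
  | Sum.inl v => v
  | Sum.inr (e, i) => if i.val ≤ 1 then (laakso n).src e else (laakso n).tgt e

lemma inr_ne_inr {n : ℕ} {e e' : (laakso n).E} {i i' : Fin 4} (h : i ≠ i') :
    (Sum.inr (e, i) : (laakso (n+1)).V) ≠ Sum.inr (e', i') := by
  intro hh
  injection hh with h2
  exact h (congrArg Prod.snd h2)

lemma no_loop : ∀ n (e : (laakso n).E), (laakso n).src e ≠ (laakso n).tgt e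
  | 0, _ => by show (false : Bool) ≠ true; decide
  | n+1, (e, j) => by
    fin_cases j
    · show (Sum.inl ((laakso n).src e) : (laakso (n+1)).V) ≠ Sum.inr (e, 0); simp
    · exact inr_ne_inr (by decide)
    · exact inr_ne_inr (by decide)
    · exact inr_ne_inr (by decide)
    · exact inr_ne_inr (by decide)
    · show (Sum.inr (e, 3) : (laakso (n+1)).V) ≠ Sum.inl ((laakso n).tgt e); simp

-- the six gadget adjacencies
lemma adj0 (n : ℕ) (e : (laakso n).E) :
    (LaaksoGraph (n+1)).Adj (Sum.inl ((laakso n).src e)) (Sum.inr (e, 0)) :=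
  ⟨Sum.inl_ne_inr, ⟨(e, 0), Or.inl ⟨rfl, rfl⟩⟩⟩
lemma adj1 (n : ℕ) (e : (laakso n).E) :
    (LaaksoGraph (n+1)).Adj (Sum.inr (e, 0)) (Sum.inr (e, 1)) :=
  ⟨inr_ne_inr (by decide), ⟨(e, 1), Or.inl ⟨rfl, rfl⟩⟩⟩
lemma adj2 (n : ℕ) (e : (laakso n).E) :
    (LaaksoGraph (n+1)).Adj (Sum.inr (e, 0)) (Sum.inr (e, 2)) :=
  ⟨inr_ne_inr (by decide), ⟨(e, 2), Or.inl ⟨rfl, rfl⟩⟩⟩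
lemma adj3 (n : ℕ) (e : (laakso n).E) :
    (LaaksoGraph (n+1)).Adj (Sum.inr (e, 1)) (Sum.inr (e, 3)) :=
  ⟨inr_ne_inr (by decide), ⟨(e, 3), Or.inl ⟨rfl, rfl⟩⟩⟩
lemma adj4 (n : ℕ) (e : (laakso n).E) :
    (LaaksoGraph (n+1)).Adj (Sum.inr (e, 2)) (Sum.inr (e, 3)) :=
  ⟨inr_ne_inr (by decide), ⟨(e, 4), Or.inl ⟨rfl, rfl⟩⟩⟩
lemma adj5 (n : ℕ) (e : (laakso n).E) :
    (LaaksoGraph (n+1)).Adj (Sum.inr (e, 3)) (Sum.inl ((laakso n).tgt e)) :=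
  ⟨Sum.inr_ne_inl, ⟨(e, 5), Or.inl ⟨rfl, rfl⟩⟩⟩

lemma exists_walk_proj (n : ℕ) (x : (laakso (n+1)).V) :
    ∃ w : (LaaksoGraph (n+1)).Walk x (Sum.inl (proj n x)), w.length ≤ 2 := by
  match x with
  | Sum.inl v => exact ⟨SimpleGraph.Walk.nil, Nat.zero_le 2⟩
  | Sum.inr (e, i) =>
    fin_cases i
    · exact ⟨((adj0 n e).symm.toWalk), (by decide : 1 ≤ 2)⟩
    · exact ⟨(SimpleGraph.Walk.cons (adj1 n e).symm (adj0 n e).symm.toWalk), le_refl 2⟩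
    · exact ⟨(SimpleGraph.Walk.cons (adj4 n e) (adj5 n e).toWalk), le_refl 2⟩
    · exact ⟨((adj5 n e).toWalk), (by decide : 1 ≤ 2)⟩

lemma dist_proj (n : ℕ) (x : (laakso (n+1)).V) :
    (LaaksoGraph (n+1)).dist x (Sum.inl (proj n x)) ≤ 2 := by
  obtain ⟨w, hw⟩ := exists_walk_proj n x
  exact le_trans (SimpleGraph.dist_le w) hw

lemma exists_lift {n : ℕ} {u v : (laakso n).V} (w : (LaaksoGraph n).Walk u v) :
    ∃ W : (LaaksoGraph (n+1)).Walk (Sum.inl u) (Sum.inl v), W.length = 4 * w.length := by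
  induction w with
  | nil => exact ⟨SimpleGraph.Walk.nil, rfl⟩
  | @cons a b c h p ih =>
    obtain ⟨W, hW⟩ := ih
    obtain ⟨hne, e, he⟩ := h
    rcases he with ⟨hs, ht⟩ | ⟨hs, ht⟩
    · subst hs; subst ht
      refine ⟨(SimpleGraph.Walk.cons (adj0 n e) (SimpleGraph.Walk.cons (adj1 n e)
        (SimpleGraph.Walk.cons (adj3 n e) ((?w : (LaaksoGraph (n+1)).Walk (Sum.inr (e,3)) _))))), ?_⟩
      case w => exact SimpleGraph.Walk.cons (adj5 n e) W
      show W.length + 1 + 1 + 1 + 1 = 4 * (p.length + 1); rw [hW]; ring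
    · subst hs; subst ht
      refine ⟨(SimpleGraph.Walk.cons (adj5 n e).symm (SimpleGraph.Walk.cons (adj3 n e).symm
        (SimpleGraph.Walk.cons (adj1 n e).symm (SimpleGraph.Walk.cons (adj0 n e).symm W)))), ?_⟩
      show W.length + 1 + 1 + 1 + 1 = 4 * (p.length + 1); rw [hW]; ring

lemma laakso_connected : ∀ n, (LaaksoGraph n).Connected
  | 0 => by
    rw [SimpleGraph.connected_iff]
    refine ⟨fun u v => ?_, ⟨(false : Bool)⟩⟩
    by_cases h : u = v
    · subst h; rfl
    · refine SimpleGraph.Adj.reachable ⟨h, (), ?_⟩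
      revert h
      exact fun h => by
        match u, v with
        | false, true => exact Or.inl ⟨rfl, rfl⟩
        | true, false => exact Or.inr ⟨rfl, rfl⟩
        | false, false => exact absurd rfl h
        | true, true => exact absurd rfl h
  | n+1 => by
    have hc := laakso_connected n
    rw [SimpleGraph.connected_iff]
    refine ⟨fun x y => ?_, ⟨Sum.inl hc.nonempty.some⟩⟩
    have hx : (LaaksoGraph (n+1)).Reachable x (Sum.inl (proj n x)) :=
      ⟨(exists_walk_proj n x).choose⟩
    have hy : (LaaksoGraph (n+1)).Reachable y (Sum.inl (proj n y)) :=
      ⟨(exists_walk_proj n y).choose⟩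
    have hmid : (LaaksoGraph (n+1)).Reachable (Sum.inl (proj n x)) (Sum.inl (proj n y)) := by
      obtain ⟨w⟩ := hc.preconnected (proj n x) (proj n y)
      exact ⟨(exists_lift w).choose⟩
    exact (hx.trans hmid).trans hy.symm

lemma dist_inl_le (n : ℕ) (u v : (laakso n).V) :
    (LaaksoGraph (n+1)).dist (Sum.inl u) (Sum.inl v) ≤ 4 * (LaaksoGraph n).dist u v := by
  obtain ⟨w, hw⟩ := (laakso_connected n).exists_walk_length_eq_dist u v
  obtain ⟨W, hW⟩ := exists_lift w
  calc (LaaksoGraph (n+1)).dist (Sum.inl u) (Sum.inl v) ≤ W.length := SimpleGraph.dist_le W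
    _ = 4 * w.length := hW
    _ = 4 * (LaaksoGraph n).dist u v := by rw [hw]

@[simp] lemma src0 (n : ℕ) (e : (laakso n).E) : (laakso (n+1)).src (e, (0:Fin 6)) = Sum.inl ((laakso n).src e) := rfl
@[simp] lemma src1 (n : ℕ) (e : (laakso n).E) : (laakso (n+1)).src (e, (1:Fin 6)) = Sum.inr (e, 0) := rfl
@[simp] lemma src2 (n : ℕ) (e : (laakso n).E) : (laakso (n+1)).src (e, (2:Fin 6)) = Sum.inr (e, 0) := rfl
@[simp] lemma src3 (n : ℕ) (e : (laakso n).E) : (laakso (n+1)).src (e, (3:Fin 6)) = Sum.inr (e, 1) := rfl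
@[simp] lemma src4 (n : ℕ) (e : (laakso n).E) : (laakso (n+1)).src (e, (4:Fin 6)) = Sum.inr (e, 2) := rfl
@[simp] lemma src5 (n : ℕ) (e : (laakso n).E) : (laakso (n+1)).src (e, (5:Fin 6)) = Sum.inr (e, 3) := rfl
@[simp] lemma tgt0 (n : ℕ) (e : (laakso n).E) : (laakso (n+1)).tgt (e, (0:Fin 6)) = Sum.inr (e, 0) := rfl
@[simp] lemma tgt1 (n : ℕ) (e : (laakso n).E) : (laakso (n+1)).tgt (e, (1:Fin 6)) = Sum.inr (e, 1) := rfl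
@[simp] lemma tgt2 (n : ℕ) (e : (laakso n).E) : (laakso (n+1)).tgt (e, (2:Fin 6)) = Sum.inr (e, 2) := rfl
@[simp] lemma tgt3 (n : ℕ) (e : (laakso n).E) : (laakso (n+1)).tgt (e, (3:Fin 6)) = Sum.inr (e, 3) := rfl
@[simp] lemma tgt4 (n : ℕ) (e : (laakso n).E) : (laakso (n+1)).tgt (e, (4:Fin 6)) = Sum.inr (e, 3) := rfl
@[simp] lemma tgt5 (n : ℕ) (e : (laakso n).E) : (laakso (n+1)).tgt (e, (5:Fin 6)) = Sum.inl ((laakso n).tgt e) := rfl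

lemma adj_src_tgt (n : ℕ) (e : (laakso n).E) :
    (LaaksoGraph n).Adj ((laakso n).src e) ((laakso n).tgt e) :=
  ⟨no_loop n e, e, Or.inl ⟨rfl, rfl⟩⟩

noncomputable def gfun (n : ℕ) (u : (laakso n).V) : (laakso (n+1)).V → ℕ
  | Sum.inl w => 4 * (LaaksoGraph n).dist u w
  | Sum.inr (e, i) =>
      min (4 * (LaaksoGraph n).dist u ((laakso n).src e) + ![1,2,2,3] i)
          (4 * (LaaksoGraph n).dist u ((laakso n).tgt e) + ![3,2,2,1] i)

lemma gfun_adj {n : ℕ} (u : (laakso n).V) {x y : (laakso (n+1)).V}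
    (h : (LaaksoGraph (n+1)).Adj x y) : gfun n u x ≤ gfun n u y + 1 := by
  obtain ⟨hne, ⟨e, j⟩, hj⟩ := h
  have hst : (LaaksoGraph n).dist ((laakso n).src e) ((laakso n).tgt e) ≤ 1 :=
    SimpleGraph.dist_le (adj_src_tgt n e).toWalk
  have h1 : (LaaksoGraph n).dist u ((laakso n).src e) ≤ (LaaksoGraph n).dist u ((laakso n).tgt e) + 1 := by
    have := (laakso_connected n).dist_triangle (u := u) (v := (laakso n).tgt e) (w := (laakso n).src e)
    have h2 : (LaaksoGraph n).dist ((laakso n).tgt e) ((laakso n).src e) ≤ 1 := by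
      rwa [SimpleGraph.dist_comm]
    omega
  have h2 : (LaaksoGraph n).dist u ((laakso n).tgt e) ≤ (LaaksoGraph n).dist u ((laakso n).src e) + 1 := by
    have := (laakso_connected n).dist_triangle (u := u) (v := (laakso n).src e) (w := (laakso n).tgt e)
    omega
  fin_cases j <;>
    simp only [src0, src1, src2, src3, src4, src5, tgt0, tgt1, tgt2, tgt3, tgt4, tgt5] at hj <;>
    rcases hj with ⟨hs, ht⟩ | ⟨hs, ht⟩ <;> subst hs <;> subst ht <;>
    simp [gfun] <;> omega

lemma gfun_walk {n : ℕ} (u : (laakso n).V) {x y : (laakso (n+1)).V}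
    (w : (LaaksoGraph (n+1)).Walk x y) : gfun n u y ≤ gfun n u x + w.length := by
  induction w with
  | nil => simp
  | @cons a b c h p ih =>
    have := gfun_adj u h.symm
    simp only [SimpleGraph.Walk.length_cons]
    omega

lemma four_dist_le (n : ℕ) (u v : (laakso n).V) :
    4 * (LaaksoGraph n).dist u v ≤ (LaaksoGraph (n+1)).dist (Sum.inl u) (Sum.inl v) := by
  obtain ⟨w, hw⟩ := (laakso_connected (n+1)).exists_walk_length_eq_dist (Sum.inl u) (Sum.inl v)
  have hg := gfun_walk u w
  have hgu : gfun n u (Sum.inl u) = 0 := by simp [gfun]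
  have hgv : gfun n u (Sum.inl v) = 4 * (LaaksoGraph n).dist u v := rfl
  omega

lemma proj_dist (n : ℕ) (x y : (laakso (n+1)).V) :
    4 * (LaaksoGraph n).dist (proj n x) (proj n y) ≤ (LaaksoGraph (n+1)).dist x y + 4 := by
  have t1 : (LaaksoGraph (n+1)).dist (Sum.inl (proj n x)) (Sum.inl (proj n y)) ≤
      (LaaksoGraph (n+1)).dist (Sum.inl (proj n x)) x + (LaaksoGraph (n+1)).dist x (Sum.inl (proj n y)) :=
    (laakso_connected (n+1)).dist_triangle (u := (Sum.inl (proj n x) : (laakso (n+1)).V)) (v := x)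
    (w := (Sum.inl (proj n y) : (laakso (n+1)).V))
  have t2 := (laakso_connected (n+1)).dist_triangle (u := x) (v := y)
    (w := (Sum.inl (proj n y) : (laakso (n+1)).V))
  have e1 : (LaaksoGraph (n+1)).dist (Sum.inl (proj n x)) x ≤ 2 := by
    exact SimpleGraph.dist_comm.trans_le (dist_proj n x)
  have e2 : (LaaksoGraph (n+1)).dist y (Sum.inl (proj n y)) ≤ 2 := dist_proj n y
  have e3 := four_dist_le n (proj n x) (proj n y)
  omega

def projK : ∀ (k m : ℕ), (laakso (m+k)).V → (laakso m).V
  | 0, _, x => x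
  | k+1, m, x => projK k m (proj (m+k) x)

def inlK : ∀ (k m : ℕ), (laakso m).V → (laakso (m+k)).V
  | 0, _, x => x
  | k+1, m, x => Sum.inl (inlK k m x)

lemma dist_inlK_projK : ∀ (k m : ℕ) (x : (laakso (m+k)).V),
    (LaaksoGraph (m+k)).dist x (inlK k m (projK k m x)) + 1 ≤ 4^k
  | 0, m, x => by simp [projK, inlK, SimpleGraph.dist_self]
  | k+1, m, x => by
    have ih := dist_inlK_projK k m (proj (m+k) x)
    have t1 := (laakso_connected (m+k+1)).dist_triangle (u := x) (v := Sum.inl (proj (m+k) x))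
      (w := (Sum.inl (inlK k m (projK k m (proj (m+k) x))) : (laakso (m+k+1)).V))
    have e1 : (LaaksoGraph (m+k+1)).dist x (Sum.inl (proj (m+k) x)) ≤ 2 := dist_proj (m+k) x
    have e2 := dist_inl_le (m+k) (proj (m+k) x) (inlK k m (projK k m (proj (m+k) x)))
    have hp : 4 ^ (k+1) = 4 * 4^k := by ring
    show (LaaksoGraph (m+k+1)).dist x (Sum.inl (inlK k m (projK k m (proj (m+k) x)))) + 1 ≤ 4^(k+1)
    omega

lemma projK_dist : ∀ (k m : ℕ) (x y : (laakso (m+k)).V),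
    4^k * (LaaksoGraph m).dist (projK k m x) (projK k m y) + 2 ≤
      (LaaksoGraph (m+k)).dist x y + 2 * 4^k
  | 0, m, x, y => by simp [projK]
  | k+1, m, x, y => by
    have ih := projK_dist k m (proj (m+k) x) (proj (m+k) y)
    have hp := proj_dist (m+k) x y
    have hq : 4 ^ (k+1) = 4 * 4^k := by ring
    show 4^(k+1) * (LaaksoGraph m).dist (projK k m (proj (m+k) x)) (projK k m (proj (m+k) y)) + 2 ≤
      (LaaksoGraph (m+k+1)).dist x y + 2 * 4^(k+1)
    set A := (LaaksoGraph m).dist (projK k m (proj (m+k) x)) (projK k m (proj (m+k) y))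
    set B := (LaaksoGraph (m+k)).dist (proj (m+k) x) (proj (m+k) y)
    set C := (LaaksoGraph (m+k+1)).dist x y
    set P := 4^k
    rw [hq]
    nlinarith [ih, hp]

lemma dist0_le (u v : (laakso 0).V) : (LaaksoGraph 0).dist u v ≤ 1 := by
  by_cases h : u = v
  · subst h; simp [SimpleGraph.dist_self]
  · have hor : ((laakso 0).src () = u ∧ (laakso 0).tgt () = v) ∨
        ((laakso 0).src () = v ∧ (laakso 0).tgt () = u) := by
      match u, v with
      | false, true => exact Or.inl ⟨rfl, rfl⟩
      | true, false => exact Or.inr ⟨rfl, rfl⟩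
      | false, false => exact absurd rfl h
      | true, true => exact absurd rfl h
    have hadj : (LaaksoGraph 0).Adj u v := ⟨h, (), hor⟩
    exact SimpleGraph.dist_le hadj.toWalk

lemma diam_le : ∀ n (u v : (laakso n).V), (LaaksoGraph n).dist u v + 2 ≤ 3 * 4^n
  | 0, u, v => by
    have := dist0_le u v
    have h40 : (4:ℕ)^0 = 1 := pow_zero 4
    omega
  | n+1, x, y => by
    have ih := diam_le n (proj n x) (proj n y)
    have t1 := (laakso_connected (n+1)).dist_triangle (u := x) (v := Sum.inl (proj n x))
      (w := (Sum.inl (proj n y) : (laakso (n+1)).V))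
    have t2 := (laakso_connected (n+1)).dist_triangle (u := x) (v := y)
      (w := (Sum.inl (proj n y) : (laakso (n+1)).V))
    have e1 := dist_proj n x
    have e2' := dist_proj n y
    have e2 : (LaaksoGraph (n+1)).dist (Sum.inl (proj n y)) y ≤ 2 := by
      exact SimpleGraph.dist_comm.trans_le e2'
    have e3 := dist_inl_le n (proj n x) (proj n y)
    have t3 := (laakso_connected (n+1)).dist_triangle (u := x) (v := Sum.inl (proj n y)) (w := y)
    have hq : (4:ℕ) ^ (n+1) = 4 * 4^n := by ring
    omega

lemma not_inr_inl {n : ℕ} {p : (laakso n).E × Fin 4} {w : (laakso n).V} :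
    (Sum.inr p : (laakso (n+1)).V) ≠ Sum.inl w := Sum.inr_ne_inl

lemma not_inl_inr {n : ℕ} {p : (laakso n).E × Fin 4} {w : (laakso n).V} :
    (Sum.inl w : (laakso (n+1)).V) ≠ Sum.inr p := Sum.inl_ne_inr

lemma inr_eq_inr {n : ℕ} {e e' : (laakso n).E} {i i' : Fin 4}
    (h : (Sum.inr (e, i) : (laakso (n+1)).V) = Sum.inr (e', i')) : e = e' ∧ i = i' := by
  injection h with h
  exact ⟨congrArg Prod.fst h, congrArg Prod.snd h⟩

lemma inl_eq_inl {n : ℕ} {w w' : (laakso n).V}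
    (h : (Sum.inl w : (laakso (n+1)).V) = Sum.inl w') : w = w' := by
  injection h

lemma mem_char {n : ℕ} {w : (laakso n).V} {e : (laakso n).E} {j : Fin 6}
    (h : (laakso (n+1)).src (e, j) = Sum.inl w ∨ (laakso (n+1)).tgt (e, j) = Sum.inl w) :
    (j = 0 ∧ (laakso n).src e = w) ∨ (j = 5 ∧ (laakso n).tgt e = w) := by
  fin_cases j <;>
    simp only [src0, src1, src2, src3, src4, src5, tgt0, tgt1, tgt2, tgt3, tgt4, tgt5] at h <;>
    rcases h with h | h <;>
    first
      | exact absurd h not_inr_inl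
      | exact Or.inl ⟨by decide, inl_eq_inl h⟩
      | exact Or.inr ⟨by decide, inl_eq_inl h⟩

lemma mem_char2 {n : ℕ} {e0 : (laakso n).E} {i : Fin 4} {e : (laakso n).E} {j : Fin 6}
    (h : (laakso (n+1)).src (e, j) = Sum.inr (e0, i) ∨ (laakso (n+1)).tgt (e, j) = Sum.inr (e0, i)) :
    e = e0 ∧ j ∈ (![({0,1,2} : Finset (Fin 6)), {1,3}, {2,4}, {3,4,5}] i) := by
  fin_cases i <;> fin_cases j <;>
    simp only [src0, src1, src2, src3, src4, src5, tgt0, tgt1, tgt2, tgt3, tgt4, tgt5] at h <;>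
    rcases h with h | h <;>
    first
      | exact absurd h not_inl_inr
      | exact absurd (inr_eq_inr h).2 (by decide)
      | exact ⟨(inr_eq_inr h).1, by decide⟩

lemma incident_card : ∀ n (v : (laakso n).V),
    ((Finset.univ : Finset (laakso n).E).filter
      (fun e => (laakso n).src e = v ∨ (laakso n).tgt e = v)).card ≤ 3
  | 0, v =>
    le_trans (Finset.card_le_one.2 (fun a _ b _ => by match a, b with | (), () => rfl))
      (by norm_num)
  | n+1, v => by
    match v with
    | Sum.inl w =>
      refine le_trans (Finset.card_le_card_of_injOn (fun p => p.1) ?_ ?_) (incident_card n w)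
      · rintro ⟨e, j⟩ hp
        simp only [Finset.coe_filter, Set.mem_setOf_eq, Finset.mem_univ, true_and] at hp ⊢
        rcases mem_char hp with ⟨_, h⟩ | ⟨_, h⟩
        · exact Or.inl h
        · exact Or.inr h
      · rintro ⟨e, j⟩ hp ⟨e', j'⟩ hp' hfst
        simp only [Finset.coe_filter, Set.mem_setOf_eq, Finset.mem_univ, true_and] at hp hp'
        obtain rfl : e = e' := hfst
        rcases mem_char hp with ⟨hj, h⟩ | ⟨hj, h⟩ <;> rcases mem_char hp' with ⟨hj', h'⟩ | ⟨hj', h'⟩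
        · rw [hj, hj']
        · exact absurd (h.trans h'.symm) (no_loop n e)
        · exact absurd (h'.trans h.symm) (no_loop n e)
        · rw [hj, hj']
    | Sum.inr (e0, i) =>
      refine le_trans (Finset.card_le_card_of_injOn (fun p => p.2)
        (t := ![({0,1,2} : Finset (Fin 6)), {1,3}, {2,4}, {3,4,5}] i) ?_ ?_) ?_
      · rintro ⟨e, j⟩ hp
        simp only [Finset.coe_filter, Set.mem_setOf_eq, Finset.mem_univ, true_and] at hp
        exact (mem_char2 hp).2
      · rintro ⟨e, j⟩ hp ⟨e', j'⟩ hp' hsnd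
        simp only [Finset.coe_filter, Set.mem_setOf_eq, Finset.mem_univ, true_and] at hp hp'
        obtain rfl : j = j' := hsnd
        rw [(mem_char2 hp).1, (mem_char2 hp').1]
      · fin_cases i <;> decide

lemma degree_le (n : ℕ) (v : (laakso n).V) : ((LaaksoGraph n).neighborFinset v).card ≤ 3 := by
  have hsub : (LaaksoGraph n).neighborFinset v ⊆
      (((Finset.univ : Finset (laakso n).E).filter
        (fun e => (laakso n).src e = v ∨ (laakso n).tgt e = v)).image
        (fun e => if (laakso n).src e = v then (laakso n).tgt e else (laakso n).src e)) := by
    intro nb hnb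
    rw [SimpleGraph.mem_neighborFinset] at hnb
    obtain ⟨hne, e, he⟩ := hnb
    rw [Finset.mem_image]
    rcases he with ⟨h1, h2⟩ | ⟨h1, h2⟩
    · exact ⟨e, by simp [Finset.mem_filter, h1], by rw [if_pos h1]; exact h2⟩
    · refine ⟨e, by simp [Finset.mem_filter, h2], ?_⟩
      by_cases hc : (laakso n).src e = v
      · exact absurd (h1 ▸ hc) (Ne.symm hne)
      · rw [if_neg hc]; exact h1
  exact le_trans (Finset.card_le_card hsub)
    (le_trans Finset.card_image_le (incident_card n v))

def ball (n : ℕ) (x : (laakso n).V) : ℕ → Finset (laakso n).V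
  | 0 => {x}
  | r+1 => (ball n x r).biUnion (fun v => insert v ((LaaksoGraph n).neighborFinset v))

lemma ball_card (n : ℕ) (x : (laakso n).V) : ∀ r, (ball n x r).card ≤ 4^r
  | 0 => by simp [ball]
  | r+1 => by
    calc (ball n x (r+1)).card
        ≤ ∑ v ∈ ball n x r, (insert v ((LaaksoGraph n).neighborFinset v)).card :=
          Finset.card_biUnion_le
      _ ≤ ∑ _v ∈ ball n x r, 4 := Finset.sum_le_sum (fun v _ =>
          le_trans (Finset.card_insert_le _ _) (by have := degree_le n v; omega))
      _ = (ball n x r).card * 4 := by rw [Finset.sum_const, smul_eq_mul]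
      _ ≤ 4^r * 4 := Nat.mul_le_mul_right 4 (ball_card n x r)
      _ = 4^(r+1) := by ring

lemma ball_mono (n : ℕ) (x : (laakso n).V) {a b : ℕ} (h : a ≤ b) : ball n x a ⊆ ball n x b := by
  induction b with
  | zero => rw [Nat.le_zero.mp h]
  | succ b ih =>
    rcases Nat.lt_or_ge a (b+1) with h' | h'
    · refine le_trans (ih (by omega)) ?_
      intro v hv
      exact Finset.mem_biUnion.2 ⟨v, hv, Finset.mem_insert_self v _⟩
    · rw [le_antisymm h h']

lemma mem_ball_of_walk {n : ℕ} {x y : (laakso n).V} (w : (LaaksoGraph n).Walk y x) :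
    y ∈ ball n x w.length := by
  induction w with
  | nil => simp [ball]
  | @cons a b c h p ih =>
    exact Finset.mem_biUnion.2 ⟨b, ih, Finset.mem_insert_of_mem
      ((SimpleGraph.mem_neighborFinset _ _ _).2 h.symm)⟩

lemma mem_ball_dist {n : ℕ} {x y : (laakso n).V} {r : ℕ}
    (h : (LaaksoGraph n).dist y x ≤ r) : y ∈ ball n x r := by
  obtain ⟨w, hw⟩ := (laakso_connected n).exists_walk_length_eq_dist y x
  exact ball_mono n x (le_trans (le_of_eq hw) h) (mem_ball_of_walk w)

lemma bounded_ncard {n r : ℕ} {S : Set (laakso n).V}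
    (hS : ∀ u ∈ S, ∀ v ∈ S, (LaaksoGraph n).dist u v ≤ r) : S.ncard ≤ 4^r := by
  rcases S.eq_empty_or_nonempty with h | ⟨x0, hx0⟩
  · simp [h]
  · have hsub : S ⊆ ↑(ball n x0 r) := fun y hy => mem_ball_dist (hS y hy x0 hx0)
    calc S.ncard ≤ (↑(ball n x0 r) : Set (laakso n).V).ncard :=
          Set.ncard_le_ncard hsub (Set.toFinite _)
      _ = (ball n x0 r).card := Set.ncard_coe_finset _
      _ ≤ 4^r := ball_card n x0 r

lemma one_le_pow4 (k : ℕ) : 1 ≤ 4^k := Nat.one_le_pow k 4 (by norm_num)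

lemma main_cover (k m : ℕ) (B : Set (laakso (m+k)).V) (dB : ℕ)
    (h : ∀ u ∈ B, ∀ v ∈ B, (LaaksoGraph (m+k)).dist u v ≤ dB)
    (hfib : 4 * 4^k ≤ dB ∨ k = 0) (hk2 : dB < 64 * 4^k) :
    ∃ 𝒞 : Finset (Set (laakso (m+k)).V), 𝒞.card ≤ 4^65 ∧
      (∀ s ∈ 𝒞, ∀ u ∈ s, ∀ v ∈ s, 2 * (LaaksoGraph (m+k)).dist u v ≤ dB) ∧
      B ⊆ ⋃ s ∈ 𝒞, s := by
  classical
  have hfin : (projK k m '' B).Finite := Set.toFinite _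
  have hP := one_le_pow4 k
  refine ⟨hfin.toFinset.image (fun w => projK k m ⁻¹' {w} : (laakso m).V → Set (laakso (m+k)).V),
    ?_, ?_, ?_⟩
  · refine le_trans Finset.card_image_le ?_
    rw [← Set.ncard_eq_toFinset_card (projK k m '' B) hfin]
    have hpair : ∀ u' ∈ projK k m '' B, ∀ v' ∈ projK k m '' B,
        (LaaksoGraph m).dist u' v' ≤ 65 := by
      rintro u' ⟨x, hx, rfl⟩ v' ⟨y, hy, rfl⟩
      have hd := projK_dist k m x y
      have hBd := h x hx y hy
      have hmul : 4^k * (LaaksoGraph m).dist (projK k m x) (projK k m y) < 4^k * 66 := by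
        omega
      have := Nat.lt_of_mul_lt_mul_left hmul
      omega
    exact bounded_ncard hpair
  · intro s hs
    obtain ⟨w, hw, rfl⟩ := Finset.mem_image.1 hs
    intro u hu v hv
    have hu' : projK k m u = w := hu
    have hv' : projK k m v = w := hv
    have h1 := dist_inlK_projK k m u
    have h2 := dist_inlK_projK k m v
    rw [hu'] at h1
    rw [hv'] at h2
    have ht := (laakso_connected (m+k)).dist_triangle (u := u) (v := inlK k m w) (w := v)
    have h2' : (LaaksoGraph (m+k)).dist (inlK k m w) v ≤ 4^k - 1 := by
      rw [SimpleGraph.dist_comm]; omega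
    rcases hfib with hfib | rfl
    · omega
    · have e0 : (4:ℕ)^(0:ℕ) = 1 := pow_zero 4
      omega
  · intro x hx
    refine Set.mem_iUnion₂.2 ⟨projK k m ⁻¹' {projK k m x}, ?_, rfl⟩
    exact Finset.mem_image.2 ⟨projK k m x, hfin.mem_toFinset.2 ⟨x, hx, rfl⟩, rfl⟩

theorem laakso_uniformly_doubling' :
    ∃ D : ℕ, 1 ≤ D ∧ ∀ n : ℕ, GraphDoublingWith (LaaksoGraph n) D := by
  classical
  refine ⟨4^65, one_le_pow4 65, fun n B dB h => ?_⟩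
  by_cases hA : 6 * 4^n ≤ dB
  · refine ⟨{B}, by simp [one_le_pow4], ?_, by simp⟩
    intro s hs u hu v hv
    rw [Finset.mem_singleton] at hs
    subst hs
    have := diam_le n u v
    omega
  · push_neg at hA
    by_cases hsmall : dB < 16
    · -- cover by singletons
      have hfinB : B.Finite := Set.toFinite _
      refine ⟨hfinB.toFinset.image (fun v => ({v} : Set (laakso n).V)), ?_, ?_, ?_⟩
      · refine le_trans Finset.card_image_le ?_
        rw [← Set.ncard_eq_toFinset_card B hfinB]
        have hpair : ∀ u ∈ B, ∀ v ∈ B, (LaaksoGraph n).dist u v ≤ 65 := by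
          intro u hu v hv
          have := h u hu v hv
          omega
        exact bounded_ncard hpair
      · intro s hs u hu v hv
        obtain ⟨w, _, rfl⟩ := Finset.mem_image.1 hs
        rw [Set.mem_singleton_iff] at hu hv
        subst hu; subst hv
        simp [SimpleGraph.dist_self]
      · intro x hx
        exact Set.mem_iUnion₂.2 ⟨{x}, Finset.mem_image.2
          ⟨x, hfinB.mem_toFinset.2 hx, rfl⟩, rfl⟩
    · push_neg at hsmall
      set k := Nat.log 4 (dB / 16) with hkdef
      have hd16 : dB / 16 ≠ 0 := by
        intro hc
        have := Nat.div_add_mod dB 16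
        have := Nat.mod_lt dB (show 0 < 16 by norm_num)
        omega
      have hk1 : 16 * 4^k ≤ dB := by
        have h1 : 4^k ≤ dB / 16 := Nat.pow_log_le_self 4 hd16
        have h2 : dB / 16 * 16 ≤ dB := Nat.div_mul_le_self dB 16
        omega
      have hk2 : dB < 64 * 4^k := by
        have h1 : dB / 16 < 4^(k+1) := Nat.lt_pow_succ_log_self (by norm_num) (dB / 16)
        have h2 : 4^(k+1) = 4 * 4^k := by ring
        have h3 := Nat.div_add_mod dB 16
        have h4 := Nat.mod_lt dB (show 0 < 16 by norm_num)
        omega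
      have hkn : k ≤ n := by
        by_contra hlt
        have h1 : 4^n ≤ 4^k := Nat.pow_le_pow_right (by norm_num) (by omega)
        have := one_le_pow4 k
        omega
      obtain ⟨m, rfl⟩ : ∃ m, n = m + k := ⟨n - k, by omega⟩
      obtain ⟨𝒞, hc1, hc2, hc3⟩ := main_cover k m B dB h (Or.inl (by omega)) hk2
      exact ⟨𝒞, hc1, hc2, hc3⟩

end LaaksoAux

/-- The unweighted Laakso graphs are uniformly doubling: there is a
constant `D ≥ 1` such that every `L_n` is doubling with constant `D`. -/
theorem laakso_uniformly_doubling :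
    ∃ D : ℕ, 1 ≤ D ∧ ∀ n : ℕ, GraphDoublingWith (LaaksoGraph n) D := by
  exact LaaksoAux.laakso_uniformly_doubling'
end

section
/- The sequence of unweighted diamond graphs {D_n} does not admit uniformly bilipschitz embeddings into the sequence of unweighted Laakso graphs {L_n}: for every C ≥ 1 there exists n ∈ ℕ such that for every m ∈ ℕ there is no map f : V(D_n) → V(L_m) and no r > 0 satisfying r·d_{D_n}(u,v) ≤ d_{L_m}(f(u),f(v)) ≤ r·C·d_{D_n}(u,v) for all u,v ∈ V(D_n). -/
open SimpleGraph

variable {m : ℕ}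

/-- The six possible (src,tgt) pairs of an edge in `laakso (m+1)` over base edge `e`. -/
def LQ (m : ℕ) (e : (laakso m).E) (x y : (laakso (m+1)).V) : Prop :=
  (x = Sum.inl ((laakso m).src e) ∧ y = Sum.inr (e, 0)) ∨
  (x = Sum.inr (e, 0) ∧ y = Sum.inr (e, 1)) ∨
  (x = Sum.inr (e, 0) ∧ y = Sum.inr (e, 2)) ∨
  (x = Sum.inr (e, 1) ∧ y = Sum.inr (e, 3)) ∨
  (x = Sum.inr (e, 2) ∧ y = Sum.inr (e, 3)) ∨
  (x = Sum.inr (e, 3) ∧ y = Sum.inl ((laakso m).tgt e))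

lemma ledge_cases (e : (laakso m).E) (j : Fin 6) :
    LQ m e ((laakso (m+1)).src (e, j)) ((laakso (m+1)).tgt (e, j)) := by
  fin_cases j
  · exact Or.inl ⟨rfl, rfl⟩
  · exact Or.inr (Or.inl ⟨rfl, rfl⟩)
  · exact Or.inr (Or.inr (Or.inl ⟨rfl, rfl⟩))
  · exact Or.inr (Or.inr (Or.inr (Or.inl ⟨rfl, rfl⟩)))
  · exact Or.inr (Or.inr (Or.inr (Or.inr (Or.inl ⟨rfl, rfl⟩))))
  · exact Or.inr (Or.inr (Or.inr (Or.inr (Or.inr ⟨rfl, rfl⟩))))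

lemma ladj_elim {x y : (laakso (m+1)).V} (h : (LaaksoGraph (m+1)).Adj x y) :
    ∃ e : (laakso m).E, LQ m e x y ∨ LQ m e y x := by
  obtain ⟨ne, ⟨e, j⟩, ⟨h1, h2⟩ | ⟨h1, h2⟩⟩ := h
  · exact ⟨e, Or.inl (h1 ▸ h2 ▸ ledge_cases e j)⟩
  · exact ⟨e, Or.inr (h1 ▸ h2 ▸ ledge_cases e j)⟩

lemma lnoloop : ∀ (m : ℕ) (e : (laakso m).E), (laakso m).src e ≠ (laakso m).tgt e := by
  intro m e
  match m, e with
  | 0, e => simp [laakso, EGraph.toSimpleGraph]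
  | m+1, (e, j) =>
    fin_cases j <;> intro h <;>
      first
        | exact Sum.inl_ne_inr h
        | exact Sum.inr_ne_inl h
        | (injection h with h1; injection h1 with h2 h3; exact absurd h3 (by decide))

lemma ladj_of_edge (e : (laakso m).E) :
    (LaaksoGraph m).Adj ((laakso m).src e) ((laakso m).tgt e) :=
  ⟨lnoloop m e, e, Or.inl ⟨rfl, rfl⟩⟩

-- explicit adjacencies in laakso (m+1)
lemma ladjA (e : (laakso m).E) :
    (LaaksoGraph (m+1)).Adj (Sum.inl ((laakso m).src e)) (Sum.inr (e, 0)) :=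
  ⟨Sum.inl_ne_inr, (e, 0), Or.inl ⟨rfl, rfl⟩⟩
lemma ladjB (e : (laakso m).E) :
    (LaaksoGraph (m+1)).Adj (Sum.inr (e, 0)) (Sum.inr (e, 1)) :=
  ⟨by intro h; injection h with h1; injection h1 with h2 h3; exact absurd h3 (by decide), (e, 1), Or.inl ⟨rfl, rfl⟩⟩
lemma ladjC (e : (laakso m).E) :
    (LaaksoGraph (m+1)).Adj (Sum.inr (e, 0)) (Sum.inr (e, 2)) :=
  ⟨by intro h; injection h with h1; injection h1 with h2 h3; exact absurd h3 (by decide), (e, 2), Or.inl ⟨rfl, rfl⟩⟩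
lemma ladjD (e : (laakso m).E) :
    (LaaksoGraph (m+1)).Adj (Sum.inr (e, 1)) (Sum.inr (e, 3)) :=
  ⟨by intro h; injection h with h1; injection h1 with h2 h3; exact absurd h3 (by decide), (e, 3), Or.inl ⟨rfl, rfl⟩⟩
lemma ladjE (e : (laakso m).E) :
    (LaaksoGraph (m+1)).Adj (Sum.inr (e, 2)) (Sum.inr (e, 3)) :=
  ⟨by intro h; injection h with h1; injection h1 with h2 h3; exact absurd h3 (by decide), (e, 4), Or.inl ⟨rfl, rfl⟩⟩
lemma ladjF (e : (laakso m).E) :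
    (LaaksoGraph (m+1)).Adj (Sum.inr (e, 3)) (Sum.inl ((laakso m).tgt e)) :=
  ⟨Sum.inr_ne_inl, (e, 5), Or.inl ⟨rfl, rfl⟩⟩

/-- the canonical length-4 lift of an edge -/
def liftWalk (e : (laakso m).E) :
    (LaaksoGraph (m+1)).Walk (Sum.inl ((laakso m).src e)) (Sum.inl ((laakso m).tgt e)) :=
  Walk.cons (ladjA e) (Walk.cons (ladjB e) (Walk.cons (ladjD e)
    (Walk.cons (ladjF e) Walk.nil)))

lemma liftWalk_length (e : (laakso m).E) : (liftWalk e).length = 4 := rfl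

lemma lift_step {u v : (laakso m).V} (h : (LaaksoGraph m).Adj u v) :
    ∃ q : (LaaksoGraph (m+1)).Walk (Sum.inl u) (Sum.inl v), q.length = 4 := by
  obtain ⟨ne, e, ⟨h1, h2⟩ | ⟨h1, h2⟩⟩ := h
  · subst h1; subst h2; exact ⟨liftWalk e, rfl⟩
  · subst h1; subst h2; exact ⟨(liftWalk e).reverse, (Walk.length_reverse _).trans (liftWalk_length e)⟩

lemma lift_walk {u v : (laakso m).V} (p : (LaaksoGraph m).Walk u v) :
    ∃ q : (LaaksoGraph (m+1)).Walk (Sum.inl u) (Sum.inl v), q.length = 4 * p.length := by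
  induction p with
  | nil => exact ⟨Walk.nil, rfl⟩
  | cons h p ih =>
    obtain ⟨q1, hq1⟩ := lift_step h
    obtain ⟨q2, hq2⟩ := ih
    exact ⟨q1.append q2, by have h1 := Walk.length_append q1 q2; have h2 := Walk.length_cons h p; omega⟩

/-- each vertex of `laakso (m+1)` is within distance 2 of an old vertex -/
lemma lnear1 (x : (laakso (m+1)).V) :
    ∃ (w : (laakso m).V) (p : (LaaksoGraph (m+1)).Walk x (Sum.inl w)), p.length ≤ 2 := by
  match x with
  | Sum.inl w => exact ⟨w, Walk.nil, Nat.le_of_ble_eq_true rfl⟩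
  | Sum.inr (e, j) =>
    fin_cases j
    · exact ⟨_, Walk.cons (ladjA e).symm Walk.nil, Nat.le_of_ble_eq_true rfl⟩
    · exact ⟨_, Walk.cons (ladjB e).symm (Walk.cons (ladjA e).symm Walk.nil), Nat.le_of_ble_eq_true rfl⟩
    · exact ⟨_, Walk.cons (ladjC e).symm (Walk.cons (ladjA e).symm Walk.nil), Nat.le_of_ble_eq_true rfl⟩
    · exact ⟨_, Walk.cons (ladjF e) Walk.nil, Nat.le_of_ble_eq_true rfl⟩

lemma lconn : ∀ m, (LaaksoGraph m).Connected := by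
  intro m
  induction m with
  | zero =>
    haveI : Nonempty (laakso 0).V := ⟨false⟩
    refine ⟨?_⟩
    intro u v
    match u, v with
    | false, false => exact Reachable.refl _
    | true, true => exact Reachable.refl _
    | false, true => exact (SimpleGraph.Adj.reachable ⟨Bool.false_ne_true, (), Or.inl ⟨rfl, rfl⟩⟩)
    | true, false =>
      exact (SimpleGraph.Adj.reachable
        (show (LaaksoGraph 0).Adj false true from ⟨Bool.false_ne_true, (), Or.inl ⟨rfl, rfl⟩⟩)).symm
  | succ m ih =>
    haveI : Nonempty (laakso (m+1)).V := ⟨Sum.inl ih.nonempty.some⟩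
    refine ⟨?_⟩
    have key : ∀ x : (laakso (m+1)).V, ∃ w : (laakso m).V,
        (LaaksoGraph (m+1)).Reachable x (Sum.inl w) := by
      intro x; obtain ⟨w, p, _⟩ := lnear1 x; exact ⟨w, ⟨p⟩⟩
    intro x y
    obtain ⟨w1, h1⟩ := key x
    obtain ⟨w2, h2⟩ := key y
    obtain ⟨p⟩ := ih.preconnected w1 w2
    obtain ⟨q, _⟩ := lift_walk p
    exact h1.trans (Reachable.trans ⟨q⟩ h2.symm)

/-! ### The potential function and the scaling of the metric -/

def cc1 : Fin 4 → ℕ | 0 => 1 | 1 => 2 | 2 => 2 | 3 => 3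
def cc2 : Fin 4 → ℕ | 0 => 3 | 1 => 2 | 2 => 2 | 3 => 1

noncomputable def Fd (m : ℕ) (u : (laakso m).V) : (laakso (m+1)).V → ℕ
  | Sum.inl w => 4 * (LaaksoGraph m).dist u w
  | Sum.inr (e, j) => min (4 * (LaaksoGraph m).dist u ((laakso m).src e) + cc1 j)
                          (4 * (LaaksoGraph m).dist u ((laakso m).tgt e) + cc2 j)

lemma Fd_lip' (u : (laakso m).V) (e : (laakso m).E) {x y : (laakso (m+1)).V}
    (hq : LQ m e x y) : Fd m u x ≤ Fd m u y + 1 ∧ Fd m u y ≤ Fd m u x + 1 := by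
  have hd : (LaaksoGraph m).dist ((laakso m).src e) ((laakso m).tgt e) = 1 :=
    SimpleGraph.dist_eq_one_iff_adj.mpr (ladj_of_edge e)
  have hAB : (LaaksoGraph m).dist u ((laakso m).src e) ≤
      (LaaksoGraph m).dist u ((laakso m).tgt e) + 1 := by
    have := (lconn m).dist_triangle (u := u) (v := (laakso m).tgt e) (w := (laakso m).src e)
    rwa [SimpleGraph.dist_comm (u := (laakso m).tgt e), hd] at this
  have hBA : (LaaksoGraph m).dist u ((laakso m).tgt e) ≤
      (LaaksoGraph m).dist u ((laakso m).src e) + 1 := by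
    have := (lconn m).dist_triangle (u := u) (v := (laakso m).src e) (w := (laakso m).tgt e)
    rwa [hd] at this
  rcases hq with ⟨h1, h2⟩ | ⟨h1, h2⟩ | ⟨h1, h2⟩ | ⟨h1, h2⟩ | ⟨h1, h2⟩ | ⟨h1, h2⟩ <;>
    subst h1 <;> subst h2 <;> simp only [Fd, cc1, cc2] <;> omega

lemma Fd_lip (u : (laakso m).V) {x y : (laakso (m+1)).V}
    (h : (LaaksoGraph (m+1)).Adj x y) : Fd m u x ≤ Fd m u y + 1 := by
  obtain ⟨e, hq | hq⟩ := ladj_elim h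
  · exact (Fd_lip' u e hq).1
  · exact (Fd_lip' u e hq).2

lemma Fd_walk (u : (laakso m).V) {x y : (laakso (m+1)).V}
    (p : (LaaksoGraph (m+1)).Walk x y) : Fd m u x ≤ Fd m u y + p.length := by
  induction p with
  | nil => simp
  | cons h p ih =>
    have := Fd_lip u h
    simp only [Walk.length_cons]
    omega

lemma ldist_lift (u v : (laakso m).V) :
    (LaaksoGraph (m+1)).dist (Sum.inl u) (Sum.inl v) = 4 * (LaaksoGraph m).dist u v := by
  apply le_antisymm
  · obtain ⟨p, hp⟩ := (lconn m).exists_walk_length_eq_dist u v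
    obtain ⟨q, hq⟩ := lift_walk p
    calc (LaaksoGraph (m+1)).dist (Sum.inl u) (Sum.inl v) ≤ q.length := SimpleGraph.dist_le q
    _ = 4 * p.length := hq
    _ = 4 * (LaaksoGraph m).dist u v := by rw [hp]
  · obtain ⟨q, hq⟩ := (lconn (m+1)).exists_walk_length_eq_dist (Sum.inl u) (Sum.inl v)
    have := Fd_walk u q.reverse
    simp only [Fd, Walk.length_reverse, SimpleGraph.dist_self, Nat.mul_zero] at this
    have := Walk.length_reverse q
    omega

lemma lnear1_dist (x : (laakso (m+1)).V) :
    ∃ w : (laakso m).V, (LaaksoGraph (m+1)).dist x (Sum.inl w) ≤ 2 := by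
  obtain ⟨w, p, hp⟩ := lnear1 x
  exact ⟨w, le_trans (SimpleGraph.dist_le p) hp⟩

def lliftV : (k : ℕ) → {m : ℕ} → (laakso m).V → (laakso (m+k)).V
  | 0, _, x => x
  | k+1, _, x => Sum.inl (lliftV k x)

lemma ldist_liftk (k : ℕ) {m : ℕ} (u v : (laakso m).V) :
    (LaaksoGraph (m+k)).dist (lliftV k u) (lliftV k v) = 4^k * (LaaksoGraph m).dist u v := by
  induction k with
  | zero => simp [lliftV]
  | succ k ih =>
    show (LaaksoGraph ((m+k)+1)).dist (Sum.inl (lliftV k u)) (Sum.inl (lliftV k v)) = _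
    rw [ldist_lift, ih, pow_succ]
    ring

def Bk : ℕ → ℕ | 0 => 0 | k+1 => 4 * Bk k + 2

lemma Bk_eq (k : ℕ) : 3 * Bk k + 2 = 2 * 4^k := by
  induction k with
  | zero => simp [Bk]
  | succ k ih =>
    have : (3 : ℕ) * Bk (k+1) + 2 = 4 * (3 * Bk k + 2) := by simp [Bk]; ring
    rw [this, ih, pow_succ]
    ring

lemma lnear_k (k : ℕ) : ∀ (m : ℕ) (x : (laakso (m+k)).V),
    ∃ w : (laakso m).V, (LaaksoGraph (m+k)).dist x (lliftV k w) ≤ Bk k := by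
  induction k with
  | zero => exact fun m x => ⟨x, by simp [lliftV, Bk, SimpleGraph.dist_self]⟩
  | succ k ih =>
    intro m x
    obtain ⟨w', h1⟩ := lnear1_dist (m := m + k) x
    obtain ⟨w, h2⟩ := ih m w'
    refine ⟨w, ?_⟩
    have h3 : (LaaksoGraph ((m+k)+1)).dist (Sum.inl w') (Sum.inl (lliftV k w)) =
        4 * (LaaksoGraph (m+k)).dist w' (lliftV k w) := ldist_lift _ _
    have h4 := (lconn ((m+k)+1)).dist_triangle (u := x) (v := Sum.inl w')
      (w := Sum.inl (lliftV k w))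
    show (LaaksoGraph ((m+k)+1)).dist x (Sum.inl (lliftV k w)) ≤ Bk (k+1)
    simp only [Bk]
    omega

lemma ldiam : ∀ (m : ℕ) (x y : (laakso m).V), (LaaksoGraph m).dist x y + 2 ≤ 3 * 4^m := by
  intro m
  induction m with
  | zero =>
    intro x y
    have : (LaaksoGraph 0).dist x y ≤ 1 := by
      match x, y with
      | false, false => exact SimpleGraph.dist_self.trans_le zero_le_one
      | true, true => exact SimpleGraph.dist_self.trans_le zero_le_one
      | false, true =>
        exact le_of_eq (SimpleGraph.dist_eq_one_iff_adj.mpr ⟨Bool.false_ne_true, (), Or.inl ⟨rfl, rfl⟩⟩)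
      | true, false =>
        exact le_of_eq (SimpleGraph.dist_eq_one_iff_adj.mpr
          (SimpleGraph.Adj.symm ⟨Bool.false_ne_true, (), Or.inl ⟨rfl, rfl⟩⟩))
    simpa using by omega
  | succ m ih =>
    intro x y
    obtain ⟨w1, h1⟩ := lnear1_dist x
    obtain ⟨w2, h2⟩ := lnear1_dist y
    have h3 : (LaaksoGraph (m+1)).dist (Sum.inl w1) (Sum.inl w2) =
        4 * (LaaksoGraph m).dist w1 w2 := ldist_lift _ _
    have h4 := (lconn (m+1)).dist_triangle (u := x) (v := Sum.inl w1) (w := y)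
    have h5 := (lconn (m+1)).dist_triangle (u := Sum.inl w1) (v := Sum.inl w2) (w := y)
    have h6 : (LaaksoGraph (m+1)).dist (Sum.inl w2) y ≤ 2 := by
      exact SimpleGraph.dist_comm.trans_le h2
    have h7 := ih w1 w2
    have h8 : (4:ℕ)^(m+1) = 4 * 4^m := by rw [pow_succ]; ring
    have h9 : (LaaksoGraph (m+1)).dist x y ≤ 2 + (4 * (LaaksoGraph m).dist w1 w2 + 2) :=
      le_trans h4 (add_le_add h1 (le_trans h5 (add_le_add h3.le h6)))
    omega

/-! ### Bounded degree and ball counting in Laakso graphs -/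

def laaksoEDecEq : ∀ m, DecidableEq (laakso m).E
  | 0 => inferInstanceAs (DecidableEq Unit)
  | m+1 => haveI := laaksoEDecEq m; inferInstanceAs (DecidableEq ((laakso m).E × Fin 6))

instance : DecidableEq (laakso m).E := laaksoEDecEq m

def laaksoVDecEq : ∀ m, DecidableEq (laakso m).V
  | 0 => inferInstanceAs (DecidableEq Bool)
  | m+1 => haveI := laaksoVDecEq m;
      inferInstanceAs (DecidableEq ((laakso m).V ⊕ ((laakso m).E × Fin 4)))

instance : DecidableEq (laakso m).V := laaksoVDecEq m

def tbl : Fin 4 → Fin 3 → Fin 6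
  | 0, 0 => 0 | 0, 1 => 1 | 0, 2 => 2
  | 1, 0 => 1 | 1, 1 => 3 | 1, 2 => 3
  | 2, 0 => 2 | 2, 1 => 4 | 2, 2 => 4
  | 3, 0 => 3 | 3, 1 => 4 | 3, 2 => 5

def lie : (m : ℕ) → (laakso m).V → Fin 3 → (laakso m).E
  | 0, _, _ => ()
  | m+1, Sum.inl w, i =>
      (lie m w i, if (laakso m).src (lie m w i) = w then 0 else 5)
  | _+1, Sum.inr (e, j), i => (e, tbl j i)

lemma lie_cov : ∀ (m : ℕ) (v : (laakso m).V) (e : (laakso m).E),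
    ((laakso m).src e = v ∨ (laakso m).tgt e = v) → ∃ i, lie m v i = e := by
  intro m
  induction m with
  | zero => intro v e _; exact ⟨0, rfl⟩
  | succ m ih =>
    rintro v ⟨e, j⟩ h
    fin_cases j
    · rcases h with h | h
      · have h' : Sum.inl ((laakso m).src e) = v := h
        subst h'
        obtain ⟨i, hi⟩ := ih ((laakso m).src e) e (Or.inl rfl)
        refine ⟨i, ?_⟩
        show (lie m ((laakso m).src e) i,
          if (laakso m).src (lie m ((laakso m).src e) i) = (laakso m).src e then (0:Fin 6) else 5)
            = (e, ⟨0, by omega⟩)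
        rw [hi, if_pos rfl]
        rfl
      · have h' : (Sum.inr (e, 0) : (laakso (m+1)).V) = v := h
        subst h'
        exact ⟨0, rfl⟩
    · rcases h with h | h
      · have h' : (Sum.inr (e, 0) : (laakso (m+1)).V) = v := h
        subst h'
        exact ⟨1, rfl⟩
      · have h' : (Sum.inr (e, 1) : (laakso (m+1)).V) = v := h
        subst h'
        exact ⟨0, rfl⟩
    · rcases h with h | h
      · have h' : (Sum.inr (e, 0) : (laakso (m+1)).V) = v := h
        subst h'
        exact ⟨2, rfl⟩
      · have h' : (Sum.inr (e, 2) : (laakso (m+1)).V) = v := h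
        subst h'
        exact ⟨0, rfl⟩
    · rcases h with h | h
      · have h' : (Sum.inr (e, 1) : (laakso (m+1)).V) = v := h
        subst h'
        exact ⟨1, rfl⟩
      · have h' : (Sum.inr (e, 3) : (laakso (m+1)).V) = v := h
        subst h'
        exact ⟨0, rfl⟩
    · rcases h with h | h
      · have h' : (Sum.inr (e, 2) : (laakso (m+1)).V) = v := h
        subst h'
        exact ⟨1, rfl⟩
      · have h' : (Sum.inr (e, 3) : (laakso (m+1)).V) = v := h
        subst h'
        exact ⟨1, rfl⟩
    · rcases h with h | h
      · have h' : (Sum.inr (e, 3) : (laakso (m+1)).V) = v := h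
        subst h'
        exact ⟨2, rfl⟩
      · have h' : Sum.inl ((laakso m).tgt e) = v := h
        subst h'
        obtain ⟨i, hi⟩ := ih ((laakso m).tgt e) e (Or.inr rfl)
        refine ⟨i, ?_⟩
        show (lie m ((laakso m).tgt e) i,
          if (laakso m).src (lie m ((laakso m).tgt e) i) = (laakso m).tgt e then (0:Fin 6) else 5)
            = (e, ⟨5, by omega⟩)
        rw [hi, if_neg (lnoloop m e)]
        rfl

def lnb (m : ℕ) (v : (laakso m).V) (i : Fin 3) : (laakso m).V :=
  if (laakso m).src (lie m v i) = v then (laakso m).tgt (lie m v i)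
  else (laakso m).src (lie m v i)

lemma lnb_cov {u v : (laakso m).V} (h : (LaaksoGraph m).Adj u v) :
    ∃ i, lnb m v i = u := by
  obtain ⟨ne, e, ⟨h1, h2⟩ | ⟨h1, h2⟩⟩ := h
  · obtain ⟨i, hi⟩ := lie_cov m v e (Or.inr h2)
    refine ⟨i, ?_⟩
    rw [lnb, hi, if_neg (fun hc => ne (h1 ▸ hc))]
    exact h1
  · obtain ⟨i, hi⟩ := lie_cov m v e (Or.inl h1)
    refine ⟨i, ?_⟩
    rw [lnb, hi, if_pos h1]
    exact h2

def lball (m : ℕ) (c : (laakso m).V) : ℕ → Finset (laakso m).V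
  | 0 => {c}
  | R+1 => (lball m c R).biUnion (fun v => insert v (Finset.image (lnb m v) Finset.univ))

lemma lball_card (c : (laakso m).V) : ∀ R, (lball m c R).card ≤ 4^R := by
  intro R
  induction R with
  | zero => simp [lball]
  | succ R ih =>
    calc (lball m c (R+1)).card
        ≤ ∑ v ∈ lball m c R, (insert v (Finset.image (lnb m v) Finset.univ)).card :=
          Finset.card_biUnion_le
      _ ≤ ∑ _v ∈ lball m c R, 4 := by
          refine Finset.sum_le_sum fun v _ => ?_
          calc (insert v (Finset.image (lnb m v) Finset.univ)).card
              ≤ (Finset.image (lnb m v) Finset.univ).card + 1 := Finset.card_insert_le _ _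
            _ ≤ (Finset.univ : Finset (Fin 3)).card + 1 := by
                have := Finset.card_image_le (f := lnb m v) (s := (Finset.univ : Finset (Fin 3)))
                omega
            _ = 4 := by simp
      _ = (lball m c R).card * 4 := by simp [Finset.sum_const, Nat.smul_one_eq_cast, mul_comm]
      _ ≤ 4^R * 4 := by exact Nat.mul_le_mul_right 4 ih
      _ = 4^(R+1) := by rw [pow_succ]

lemma lball_mono (c : (laakso m).V) (R : ℕ) : lball m c R ⊆ lball m c (R+1) := by
  intro u hu
  rw [lball, Finset.mem_biUnion]
  exact ⟨u, hu, Finset.mem_insert_self _ _⟩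

lemma lball_mem (c : (laakso m).V) : ∀ (R : ℕ) (u : (laakso m).V),
    (LaaksoGraph m).dist c u ≤ R → u ∈ lball m c R := by
  intro R
  induction R with
  | zero =>
    intro u h
    have : u = c := ((lconn m).dist_eq_zero_iff.mp (Nat.le_zero.mp h)).symm
    subst this
    simp [lball]
  | succ R ih =>
    intro u h
    by_cases h' : (LaaksoGraph m).dist c u ≤ R
    · exact lball_mono c R (ih u h')
    · have he : (LaaksoGraph m).dist c u = R + 1 := by omega
      have hne : u ≠ c := by
        intro hc; subst hc
        rw [SimpleGraph.dist_self (G := LaaksoGraph m)] at he; omega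
      obtain ⟨p, hp⟩ := (lconn m).exists_walk_length_eq_dist c u
      obtain ⟨v', ha, q', hq⟩ := (p.reverse).exists_eq_cons_of_ne hne
      have hlen : q'.length = R := by
        have := congrArg SimpleGraph.Walk.length hq
        simp only [Walk.length_reverse, Walk.length_cons, hp] at this
        omega
      have hv' : (LaaksoGraph m).dist c v' ≤ R := by
        have := SimpleGraph.dist_le q'.reverse
        simpa [hlen] using this
      obtain ⟨i, hi⟩ := lnb_cov ha
      rw [lball, Finset.mem_biUnion]
      refine ⟨v', ih v' hv', Finset.mem_insert_of_mem ?_⟩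
      rw [Finset.mem_image]
      exact ⟨i, Finset.mem_univ i, hi⟩

/-! ### Diamond graphs: root, root edges, connectivity -/

variable {n : ℕ}

def DQ (n : ℕ) (e : (diamond n).E) (x y : (diamond (n+1)).V) : Prop :=
  (x = Sum.inl ((diamond n).src e) ∧ y = Sum.inr (e, false)) ∨
  (x = Sum.inr (e, false) ∧ y = Sum.inl ((diamond n).tgt e)) ∨
  (x = Sum.inl ((diamond n).src e) ∧ y = Sum.inr (e, true)) ∨
  (x = Sum.inr (e, true) ∧ y = Sum.inl ((diamond n).tgt e))

lemma dedge_cases (e : (diamond n).E) (j : Fin 4) :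
    DQ n e ((diamond (n+1)).src (e, j)) ((diamond (n+1)).tgt (e, j)) := by
  fin_cases j
  · exact Or.inl ⟨rfl, rfl⟩
  · exact Or.inr (Or.inl ⟨rfl, rfl⟩)
  · exact Or.inr (Or.inr (Or.inl ⟨rfl, rfl⟩))
  · exact Or.inr (Or.inr (Or.inr ⟨rfl, rfl⟩))

lemma dadj_elim {x y : (diamond (n+1)).V} (h : (DiamondGraph (n+1)).Adj x y) :
    ∃ e : (diamond n).E, DQ n e x y ∨ DQ n e y x := by
  obtain ⟨ne, ⟨e, j⟩, ⟨h1, h2⟩ | ⟨h1, h2⟩⟩ := h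
  · exact ⟨e, Or.inl (h1 ▸ h2 ▸ dedge_cases e j)⟩
  · exact ⟨e, Or.inr (h1 ▸ h2 ▸ dedge_cases e j)⟩

lemma dnoloop : ∀ (n : ℕ) (e : (diamond n).E), (diamond n).src e ≠ (diamond n).tgt e := by
  intro n e
  match n, e with
  | 0, e => simp [diamond, EGraph.toSimpleGraph]
  | n+1, (e, j) =>
    fin_cases j <;> intro h <;> first | exact Sum.inl_ne_inr h | exact Sum.inr_ne_inl h

lemma dadj_of_edge (e : (diamond n).E) :
    (DiamondGraph n).Adj ((diamond n).src e) ((diamond n).tgt e) :=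
  ⟨dnoloop n e, e, Or.inl ⟨rfl, rfl⟩⟩

lemma dadj0 (e : (diamond n).E) (b : Bool) :
    (DiamondGraph (n+1)).Adj (Sum.inl ((diamond n).src e)) (Sum.inr (e, b)) := by
  cases b
  · exact ⟨Sum.inl_ne_inr, (e, 0), Or.inl ⟨rfl, rfl⟩⟩
  · exact ⟨Sum.inl_ne_inr, (e, 2), Or.inl ⟨rfl, rfl⟩⟩

lemma dadj1 (e : (diamond n).E) (b : Bool) :
    (DiamondGraph (n+1)).Adj (Sum.inr (e, b)) (Sum.inl ((diamond n).tgt e)) := by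
  cases b
  · exact ⟨Sum.inr_ne_inl, (e, 1), Or.inl ⟨rfl, rfl⟩⟩
  · exact ⟨Sum.inr_ne_inl, (e, 3), Or.inl ⟨rfl, rfl⟩⟩

lemma dlift_step {u v : (diamond n).V} (h : (DiamondGraph n).Adj u v) :
    (DiamondGraph (n+1)).Reachable (Sum.inl u) (Sum.inl v) := by
  obtain ⟨ne, e, ⟨h1, h2⟩ | ⟨h1, h2⟩⟩ := h
  · subst h1; subst h2
    exact ((dadj0 e false).reachable).trans ((dadj1 e false).reachable)
  · subst h1; subst h2
    exact (((dadj0 e false).reachable).trans ((dadj1 e false).reachable)).symm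

lemma dconn : ∀ n, (DiamondGraph n).Connected := by
  intro n
  induction n with
  | zero =>
    haveI : Nonempty (diamond 0).V := ⟨false⟩
    refine ⟨?_⟩
    intro u v
    match u, v with
    | false, false => exact Reachable.refl _
    | true, true => exact Reachable.refl _
    | false, true => exact (SimpleGraph.Adj.reachable ⟨Bool.false_ne_true, (), Or.inl ⟨rfl, rfl⟩⟩)
    | true, false =>
      exact (SimpleGraph.Adj.reachable
        (show (DiamondGraph 0).Adj false true from ⟨Bool.false_ne_true, (), Or.inl ⟨rfl, rfl⟩⟩)).symm
  | succ n ih =>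
    haveI : Nonempty (diamond (n+1)).V := ⟨Sum.inl ih.nonempty.some⟩
    refine ⟨?_⟩
    have key : ∀ x : (diamond (n+1)).V, ∃ w : (diamond n).V,
        (DiamondGraph (n+1)).Reachable x (Sum.inl w) := by
      rintro (w | ⟨e, b⟩)
      · exact ⟨w, Reachable.refl _⟩
      · exact ⟨(diamond n).src e, ((dadj0 e b).symm).reachable⟩
    intro x y
    obtain ⟨w1, h1⟩ := key x
    obtain ⟨w2, h2⟩ := key y
    have h3 : (DiamondGraph (n+1)).Reachable (Sum.inl w1) (Sum.inl w2) := by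
      obtain ⟨p⟩ := ih.preconnected w1 w2
      clear h1 h2
      induction p with
      | nil => exact Reachable.refl _
      | cons h p ihp => exact (dlift_step h).trans ihp
    exact h1.trans (h3.trans h2.symm)

def droot : (n : ℕ) → (diamond n).V
  | 0 => false
  | n + 1 => Sum.inl (droot n)

def rootEdges : (n : ℕ) → Finset (diamond n).E
  | 0 => {()}
  | n + 1 => (rootEdges n) ×ˢ ({0, 2} : Finset (Fin 4))

lemma card_rootEdges : ∀ n, (rootEdges n).card = 2^n := by
  intro n
  induction n with
  | zero => rfl
  | succ n ih =>
    show ((rootEdges n) ×ˢ ({0, 2} : Finset (Fin 4))).card = 2^(n+1)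
    rw [Finset.card_product, ih]
    rw [show ({0, 2} : Finset (Fin 4)).card = 2 from rfl]
    ring

lemma mem_rootEdges_succ {e : (diamond n).E} {j : Fin 4} :
    (e, j) ∈ rootEdges (n+1) ↔ e ∈ rootEdges n ∧ (j = 0 ∨ j = 2) := by
  show (e, j) ∈ (rootEdges n) ×ˢ ({0, 2} : Finset (Fin 4)) ↔ _
  rw [Finset.mem_product]
  constructor
  · rintro ⟨h1, h2⟩
    refine ⟨h1, ?_⟩
    rcases Finset.mem_insert.mp h2 with h | h
    · exact Or.inl h
    · exact Or.inr (Finset.mem_singleton.mp h)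
  · rintro ⟨h1, h2 | h2⟩ <;> subst h2
    · exact ⟨h1, Finset.mem_insert_self _ _⟩
    · exact ⟨h1, Finset.mem_insert_of_mem (Finset.mem_singleton_self _)⟩

lemma src_rootEdges : ∀ n, ∀ e ∈ rootEdges n, (diamond n).src e = droot n := by
  intro n
  induction n with
  | zero => intro e _; rfl
  | succ n ih =>
    rintro ⟨e, j⟩ he
    obtain ⟨h1, h2 | h2⟩ := mem_rootEdges_succ.mp he <;> subst h2 <;>
      · show Sum.inl ((diamond n).src e) = Sum.inl (droot n)
        rw [ih e h1]

lemma tgt_rootEdges_inr : ∀ e ∈ rootEdges (n+1), ∃ p : (diamond n).E × Bool,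
    (diamond (n+1)).tgt e = Sum.inr p := by
  rintro ⟨e, j⟩ he
  obtain ⟨h1, h2 | h2⟩ := mem_rootEdges_succ.mp he <;> subst h2
  · exact ⟨(e, false), rfl⟩
  · exact ⟨(e, true), rfl⟩

lemma tgt_rootEdges_inj : ∀ e ∈ rootEdges (n+1), ∀ e' ∈ rootEdges (n+1),
    (diamond (n+1)).tgt e = (diamond (n+1)).tgt e' → e = e' := by
  rintro ⟨e, j⟩ he ⟨e', j'⟩ he' h
  obtain ⟨h1, h2 | h2⟩ := mem_rootEdges_succ.mp he <;>
    obtain ⟨h1', h2' | h2'⟩ := mem_rootEdges_succ.mp he' <;> subst h2 <;> subst h2'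
  · have h' : (Sum.inr (e, false) : (diamond (n+1)).V) = Sum.inr (e', false) := h
    injection h' with h''
    injection h'' with ha hb
    rw [ha]
  · have h' : (Sum.inr (e, false) : (diamond (n+1)).V) = Sum.inr (e', true) := h
    injection h' with h''
    injection h'' with ha hb
    exact absurd hb (by decide)
  · have h' : (Sum.inr (e, true) : (diamond (n+1)).V) = Sum.inr (e', false) := h
    injection h' with h''
    injection h'' with ha hb
    exact absurd hb (by decide)
  · have h' : (Sum.inr (e, true) : (diamond (n+1)).V) = Sum.inr (e', true) := h
    injection h' with h''
    injection h'' with ha hb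
    rw [ha]

lemma dnoadj_inr (p q : (diamond n).E × Bool) :
    ¬ (DiamondGraph (n+1)).Adj (Sum.inr p) (Sum.inr q) := by
  intro h
  obtain ⟨e, hq | hq⟩ := dadj_elim h <;>
    rcases hq with ⟨h1, h2⟩ | ⟨h1, h2⟩ | ⟨h1, h2⟩ | ⟨h1, h2⟩ <;>
      first | exact Sum.inl_ne_inr h1 | exact Sum.inr_ne_inl h1 | exact Sum.inl_ne_inr h2 | exact Sum.inr_ne_inl h2

lemma ddist_root (e : (diamond n).E) (he : e ∈ rootEdges n) :
    (DiamondGraph n).dist (droot n) ((diamond n).tgt e) = 1 :=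
  SimpleGraph.dist_eq_one_iff_adj.mpr (src_rootEdges n e he ▸ dadj_of_edge e)

lemma ddist_pair {e e' : (diamond (n+1)).E} (he : e ∈ rootEdges (n+1))
    (he' : e' ∈ rootEdges (n+1)) (hne : e ≠ e') :
    2 ≤ (DiamondGraph (n+1)).dist ((diamond (n+1)).tgt e) ((diamond (n+1)).tgt e') := by
  have htne : (diamond (n+1)).tgt e ≠ (diamond (n+1)).tgt e' :=
    fun hc => hne (tgt_rootEdges_inj e he e' he' hc)
  have h0 : (DiamondGraph (n+1)).dist ((diamond (n+1)).tgt e) ((diamond (n+1)).tgt e') ≠ 0 :=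
    fun hc => htne ((dconn (n+1)).dist_eq_zero_iff.mp hc)
  have h1 : (DiamondGraph (n+1)).dist ((diamond (n+1)).tgt e) ((diamond (n+1)).tgt e') ≠ 1 := by
    intro hc
    have hadj := SimpleGraph.dist_eq_one_iff_adj.mp hc
    obtain ⟨p, hp⟩ := tgt_rootEdges_inr e he
    obtain ⟨p', hp'⟩ := tgt_rootEdges_inr e' he'
    rw [hp, hp'] at hadj
    exact dnoadj_inr p p' hadj
  omega

/-- The sequence of unweighted diamond graphs does not admit uniformly
bilipschitz embeddings into the sequence of unweighted Laakso graphs: for every `C ≥ 1`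
there is `n` such that for every `m` there is no map `f : V(D_n) → V(L_m)` and no `r > 0`
with `r·d_{D_n}(u,v) ≤ d_{L_m}(f u, f v) ≤ r·C·d_{D_n}(u,v)` for all `u, v`. -/
theorem diamonds_not_uniformly_bilipschitz_into_laakso :
    ∀ C : ℝ, 1 ≤ C → ∃ n : ℕ, ∀ m : ℕ,
      ¬ ∃ (f : (diamond n).V → (laakso m).V) (r : ℝ), 0 < r ∧
        ∀ u v : (diamond n).V,
          r * ((DiamondGraph n).dist u v : ℝ) ≤ ((LaaksoGraph m).dist (f u) (f v) : ℝ) ∧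
          ((LaaksoGraph m).dist (f u) (f v) : ℝ) ≤ r * C * ((DiamondGraph n).dist u v : ℝ) := by
  intro C hC
  set D : ℕ := ⌈8*C+8⌉₊ with hD
  refine ⟨2*D+4+1, ?_⟩
  intro m
  rintro ⟨f, r, hr, hf⟩
  set s : (diamond (2*D+4+1)).V := droot (2*D+4+1) with hs
  set S : Finset (diamond (2*D+4+1)).E := rootEdges (2*D+4+1) with hS
  set w : (diamond (2*D+4+1)).E → (diamond (2*D+4+1)).V :=
    fun e => (diamond (2*D+4+1)).tgt e with hw
  have hCpos : (0:ℝ) < C := lt_of_lt_of_le one_pos hC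
  -- upper bound between images of root and neighbors
  have hub : ∀ e ∈ S, ((LaaksoGraph m).dist (f s) (f (w e)) : ℝ) ≤ r*C := by
    intro e he
    have h2 := (hf s (w e)).2
    rw [show (DiamondGraph (2*D+4+1)).dist s (w e) = 1 from ddist_root e he] at h2
    rw [Nat.cast_one, mul_one] at h2
    exact h2
  -- lower bound between images of two distinct neighbors
  have hlb : ∀ e ∈ S, ∀ e' ∈ S, e ≠ e' →
      2*r ≤ ((LaaksoGraph m).dist (f (w e)) (f (w e')) : ℝ) := by
    intro e he e' he' hne
    have h1 := (hf (w e) (w e')).1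
    have h2 := ddist_pair he he' hne
    have h2' : (2:ℝ) ≤ ((DiamondGraph (2*D+4+1)).dist (w e) (w e') : ℝ) := by exact_mod_cast h2
    nlinarith
  -- upper bound between images of two neighbors
  have hub2 : ∀ e ∈ S, ∀ e' ∈ S,
      ((LaaksoGraph m).dist (f (w e)) (f (w e')) : ℝ) ≤ 2*(r*C) := by
    intro e he e' he'
    have t := (lconn m).dist_triangle (u := f (w e)) (v := f s) (w := f (w e'))
    have c1 : ((LaaksoGraph m).dist (f (w e)) (f s) : ℝ) ≤ r*C := by
      rw [SimpleGraph.dist_comm]; exact hub e he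
    have c2 := hub e' he'
    have t' : ((LaaksoGraph m).dist (f (w e)) (f (w e')) : ℝ) ≤
        ((LaaksoGraph m).dist (f (w e)) (f s) : ℝ) + ((LaaksoGraph m).dist (f s) (f (w e')) : ℝ) := by
      exact_mod_cast t
    linarith
  -- two distinct root edges
  have hScard : S.card = 2^(2*D+4+1) := card_rootEdges _
  have h2le : 1 < S.card := by
    rw [hScard]
    calc 1 < 2 := one_lt_two
    _ = 2^1 := (pow_one 2).symm
    _ ≤ 2^(2*D+4+1) := Nat.pow_le_pow_right (by norm_num) (by omega)
  obtain ⟨e1, he1, e2, he2, hne12⟩ := Finset.one_lt_card.mp h2le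
  -- r is bounded by the diameter of the Laakso graph
  have hdiam := ldiam m (f (w e1)) (f (w e2))
  have hrm : 2*r ≤ 3*(4:ℝ)^m := by
    have h1 := hlb e1 he1 e2 he2 hne12
    have h2 : ((LaaksoGraph m).dist (f (w e1)) (f (w e2)) : ℝ) + 2 ≤ 3*(4:ℝ)^m := by
      exact_mod_cast hdiam
    linarith
  -- find the scale k
  set R : ℕ := ⌈r⌉₊ with hR
  have hR0 : R ≠ 0 := Nat.pos_iff_ne_zero.mp (Nat.ceil_pos.mpr hr)
  set k : ℕ := Nat.log 4 R with hk
  have h4k : 4^k ≤ R := Nat.pow_log_le_self 4 hR0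
  have h4k2 : R < 4^(k+1) := Nat.lt_pow_succ_log_self (by norm_num) R
  have hrR : r ≤ (R:ℝ) := Nat.le_ceil r
  have hRr : (R:ℝ) < r + 1 := Nat.ceil_lt_add_one hr.le
  have hkm : k ≤ m := by
    have hp1 : (1:ℝ) ≤ (4:ℝ)^m := one_le_pow₀ (by norm_num)
    have hA : r ≤ ((2*4^m : ℕ):ℝ) := by push_cast; linarith
    have hB : R ≤ 2*4^m := Nat.ceil_le.mpr hA
    have hC' : (4:ℕ)^k < 4^(m+1) := by
      calc (4:ℕ)^k ≤ R := h4k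
      _ ≤ 2*4^m := hB
      _ < 4*4^m := by have : 0 < (4:ℕ)^m := pow_pos (by norm_num) m; omega
      _ = 4^(m+1) := by rw [pow_succ]; ring
    have := (Nat.pow_lt_pow_iff_right (a := 4) (by norm_num)).mp hC'
    omega
  obtain ⟨m', rfl⟩ : ∃ m', m = m' + k := ⟨m - k, by omega⟩
  -- project to the coarse Laakso graph
  choose proj hproj using lnear_k k m'
  set a : (diamond (2*D+4+1)).E → (laakso m').V := fun e => proj (f (w e)) with ha
  have hBk : 3*(Bk k:ℝ) + 2 = 2*(4:ℝ)^k := by exact_mod_cast Bk_eq k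
  have h4kR : (4:ℝ)^k ≤ (R:ℝ) := by exact_mod_cast h4k
  have hBkr : 3*(Bk k:ℝ) ≤ 2*r := by linarith
  have hr4k : r < 4*(4:ℝ)^k := by
    have h2 : (R:ℝ) < ((4^(k+1):ℕ):ℝ) := by exact_mod_cast h4k2
    push_cast at h2
    rw [pow_succ] at h2
    linarith
  have h4kpos : (0:ℝ) < (4:ℝ)^k := by positivity
  -- key estimates for distinct root edges
  have key : ∀ e ∈ S, ∀ e' ∈ S, e ≠ e' →
      a e ≠ a e' ∧ (LaaksoGraph m').dist (a e) (a e') ≤ D := by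
    intro e he e' he' hne
    have hbb : ((LaaksoGraph (m'+k)).dist (lliftV k (a e)) (lliftV k (a e')) : ℝ) =
        (4:ℝ)^k * ((LaaksoGraph m').dist (a e) (a e') : ℝ) := by
      exact_mod_cast ldist_liftk k (a e) (a e')
    have hpe : ((LaaksoGraph (m'+k)).dist (f (w e)) (lliftV k (a e)) : ℝ) ≤ (Bk k : ℝ) := by
      exact_mod_cast hproj (f (w e))
    have hpe' : ((LaaksoGraph (m'+k)).dist (f (w e')) (lliftV k (a e')) : ℝ) ≤ (Bk k : ℝ) := by
      exact_mod_cast hproj (f (w e'))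
    -- triangle inequalities (in ℕ, then cast)
    have u1 := (lconn (m'+k)).dist_triangle (u := lliftV k (a e)) (v := f (w e))
      (w := lliftV k (a e'))
    have u2 := (lconn (m'+k)).dist_triangle (u := f (w e)) (v := f (w e'))
      (w := lliftV k (a e'))
    have v1 := (lconn (m'+k)).dist_triangle (u := f (w e)) (v := lliftV k (a e))
      (w := f (w e'))
    have v2 := (lconn (m'+k)).dist_triangle (u := lliftV k (a e)) (v := lliftV k (a e'))
      (w := f (w e'))
    have t1 : ((LaaksoGraph (m'+k)).dist (lliftV k (a e)) (lliftV k (a e')) : ℝ) ≤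
        ((LaaksoGraph (m'+k)).dist (lliftV k (a e)) (f (w e)) : ℝ) +
        ((LaaksoGraph (m'+k)).dist (f (w e)) (f (w e')) : ℝ) +
        ((LaaksoGraph (m'+k)).dist (f (w e')) (lliftV k (a e')) : ℝ) := by
      have : (LaaksoGraph (m'+k)).dist (lliftV k (a e)) (lliftV k (a e')) ≤
          (LaaksoGraph (m'+k)).dist (lliftV k (a e)) (f (w e)) +
          (LaaksoGraph (m'+k)).dist (f (w e)) (f (w e')) +
          (LaaksoGraph (m'+k)).dist (f (w e')) (lliftV k (a e')) := by omega
      exact_mod_cast this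
    have t2 : ((LaaksoGraph (m'+k)).dist (f (w e)) (f (w e')) : ℝ) ≤
        ((LaaksoGraph (m'+k)).dist (f (w e)) (lliftV k (a e)) : ℝ) +
        ((LaaksoGraph (m'+k)).dist (lliftV k (a e)) (lliftV k (a e')) : ℝ) +
        ((LaaksoGraph (m'+k)).dist (lliftV k (a e')) (f (w e')) : ℝ) := by
      have : (LaaksoGraph (m'+k)).dist (f (w e)) (f (w e')) ≤
          (LaaksoGraph (m'+k)).dist (f (w e)) (lliftV k (a e)) +
          (LaaksoGraph (m'+k)).dist (lliftV k (a e)) (lliftV k (a e')) +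
          (LaaksoGraph (m'+k)).dist (lliftV k (a e')) (f (w e')) := by omega
      exact_mod_cast this
    have hcm : ((LaaksoGraph (m'+k)).dist (lliftV k (a e)) (f (w e)) : ℕ) =
        ((LaaksoGraph (m'+k)).dist (f (w e)) (lliftV k (a e)) : ℕ) := SimpleGraph.dist_comm
    have hcm' : ((LaaksoGraph (m'+k)).dist (lliftV k (a e')) (f (w e')) : ℕ) =
        ((LaaksoGraph (m'+k)).dist (f (w e')) (lliftV k (a e')) : ℕ) := SimpleGraph.dist_comm
    have hup := hub2 e he e' he'
    have hlo := hlb e he e' he' hne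
    set dd : ℝ := ((LaaksoGraph m').dist (a e) (a e') : ℝ) with hdd
    have hddnn : 0 ≤ dd := Nat.cast_nonneg _
    have hupper : (4:ℝ)^k * dd ≤ 2*(r*C) + 2*(Bk k : ℝ) := by
      rw [← hbb]
      rw [hcm] at t1
      linarith
    have hdd8 : dd ≤ 8*C + 8 := by
      have h1 : dd * r ≤ dd * (4*(4:ℝ)^k) :=
        mul_le_mul_of_nonneg_left (le_of_lt hr4k) hddnn
      have h2 : dd * (4*(4:ℝ)^k) = 4 * ((4:ℝ)^k * dd) := by ring
      have h3 : dd * r ≤ 8*(r*C) + 8*(Bk k : ℝ) := by rw [h2] at h1; linarith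
      have h4 : 8*(Bk k : ℝ) ≤ (16/3)*r := by linarith
      have h5 : dd * r ≤ (8*C + 16/3) * r := by nlinarith
      have h6 : dd ≤ 8*C + 16/3 := le_of_mul_le_mul_right (by linarith) hr
      linarith
    have hddD : (LaaksoGraph m').dist (a e) (a e') ≤ D := by
      have hDge : (8*C + 8 : ℝ) ≤ (D:ℝ) := Nat.le_ceil _
      have hle : dd ≤ (D:ℝ) := le_trans hdd8 hDge
      rw [hdd] at hle
      exact_mod_cast hle
    have hlower : 2*r - 2*(Bk k : ℝ) ≤ (4:ℝ)^k * dd := by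
      rw [← hbb]
      rw [hcm'] at t2
      linarith
    have hddpos : dd ≠ 0 := by
      intro hc
      rw [hc, mul_zero] at hlower
      linarith
    refine ⟨?_, hddD⟩
    intro hc
    apply hddpos
    rw [hdd, hc]
    simp [SimpleGraph.dist_self]
  -- all projected points lie in a small ball
  have hmap : ∀ e ∈ S, a e ∈ lball m' (a e1) D := by
    intro e he
    by_cases hee : e = e1
    · subst hee
      apply lball_mem
      simp [SimpleGraph.dist_self]
    · apply lball_mem
      exact (key e1 he1 e he (fun hc => hee hc.symm)).2
  have hinj : Set.InjOn a S := by
    intro e he e' he' hae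
    by_contra hne
    exact (key e (by simpa using he) e' (by simpa using he') hne).1 hae
  have hcard1 : S.card ≤ (lball m' (a e1) D).card :=
    Finset.card_le_card_of_injOn a hmap hinj
  have hfinal : 2^(2*D+4+1) ≤ 4^D := by
    rw [← hScard]
    exact le_trans hcard1 (lball_card _ _)
  have h4D : (4:ℕ)^D = 2^(2*D) := by
    rw [pow_mul]; norm_num
  rw [h4D] at hfinal
  have := (Nat.pow_le_pow_iff_right (by norm_num : 1 < 2)).mp hfinal
  omega
end
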